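/- arXiv:2010.01076 — 3 statements merged into one kernel-verified Lean document; each statement's English description precedes it below -/
import Mathlib

section
/- The closure of D equals {x ∈ ℝⁿ : x has all entries positive and −J(x) is an M-matrix}, and the boundary of D equals {x ∈ ℝⁿ : x has all entries positive and −J(x) is a singular M-matrix}. -/
open Matrix Set

noncomputable section

/-- `A` is irreducible: for every nonempty proper subset `α` of the index set,
the submatrix `A[α, αᶜ]` is not the zero matrix. -/
def IsIrred {k : ℕ} (A : Matrix (Fin k) (Fin k) ℝ) : Prop :=
  ∀ α : Finset (Fin k), α.Nonempty → α ≠ Finset.univ → ∃ i ∈ α, ∃ j ∈ αᶜ, A i j ≠ 0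

/-- `A` is a Z-matrix: off-diagonal entries are nonpositive. -/
def IsZmat {k : ℕ} (A : Matrix (Fin k) (Fin k) ℝ) : Prop :=
  ∀ i j, i ≠ j → A i j ≤ 0

/-- `A` is an M-matrix: a Z-matrix all of whose eigenvalues have nonnegative real part. -/
def IsMmat {k : ℕ} (A : Matrix (Fin k) (Fin k) ℝ) : Prop :=
  IsZmat A ∧ ∀ μ ∈ spectrum ℂ (A.map (Complex.ofReal)), 0 ≤ μ.re

/-- `A` is a nonsingular M-matrix: a Z-matrix all of whose eigenvalues have positive real part. -/
def IsNonsingMmat {k : ℕ} (A : Matrix (Fin k) (Fin k) ℝ) : Prop :=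
  IsZmat A ∧ ∀ μ ∈ spectrum ℂ (A.map (Complex.ofReal)), 0 < μ.re

/-- `P_c(x) = [x] Y (V* − x)`. -/
def Pc {k : ℕ} (Y : Matrix (Fin k) (Fin k) ℝ) (Vs : Fin k → ℝ) (x : Fin k → ℝ) : Fin k → ℝ :=
  Matrix.diagonal x *ᵥ (Y *ᵥ (Vs - x))

/-- Jacobian of `P_c` at `x`: `J(x) = [Y(V* − x)] − [x] Y`. -/
def Jmat {k : ℕ} (Y : Matrix (Fin k) (Fin k) ℝ) (Vs : Fin k → ℝ) (x : Fin k → ℝ) :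
    Matrix (Fin k) (Fin k) ℝ :=
  Matrix.diagonal (Y *ᵥ (Vs - x)) - Matrix.diagonal x * Y

/-- long-term voltage stable operating points. -/
def Dset {k : ℕ} (Y : Matrix (Fin k) (Fin k) ℝ) (Vs : Fin k → ℝ) : Set (Fin k → ℝ) :=
  {x | (∀ i, 0 < x i) ∧ IsUnit (Jmat Y Vs x).det ∧ ∀ i j, (Jmat Y Vs x)⁻¹ i j < 0}

/-- feasible power demands. -/
def Fset {k : ℕ} (Y : Matrix (Fin k) (Fin k) ℝ) (Vs : Fin k → ℝ) : Set (Fin k → ℝ) :=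
  {P | ∃ x, (∀ i, 0 < x i) ∧ Pc Y Vs x = P}

/-- `h(λ) = (1/2)([λ] Y + Y [λ])`. -/
def hmat {k : ℕ} (Y : Matrix (Fin k) (Fin k) ℝ) (l : Fin k → ℝ) : Matrix (Fin k) (Fin k) ℝ :=
  (1/2 : ℝ) • (Matrix.diagonal l * Y + Y * Matrix.diagonal l)

/-- `Λ₁ = {λ ∈ Λ : λ > 0, 1ᵀλ = 1}`. -/
def Lam1 {k : ℕ} (Y : Matrix (Fin k) (Fin k) ℝ) : Set (Fin k → ℝ) :=
  {l | (hmat Y l).PosDef ∧ (∀ i, 0 < l i) ∧ ∑ i, l i = 1}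

/-- `φ(λ) = (1/2) h(λ)⁻¹ [λ] I*` where `I* = Y V*`. -/
def phiv {k : ℕ} (Y : Matrix (Fin k) (Fin k) ℝ) (Vs : Fin k → ℝ) (l : Fin k → ℝ) : Fin k → ℝ :=
  (1/2 : ℝ) • ((hmat Y l)⁻¹ *ᵥ (Matrix.diagonal l *ᵥ (Y *ᵥ Vs)))

/-- `‖x‖_{h(λ)}²  = xᵀ h(λ) x`. -/
def qnorm {k : ℕ} (Y : Matrix (Fin k) (Fin k) ℝ) (l x : Fin k → ℝ) : ℝ :=
  x ⬝ᵥ (hmat Y l *ᵥ x)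

/-- The half-space `H_λ`. -/
def Hset {k : ℕ} (Y : Matrix (Fin k) (Fin k) ℝ) (Vs : Fin k → ℝ) (l : Fin k → ℝ) :
    Set (Fin k → ℝ) :=
  {y | l ⬝ᵥ y ≤ qnorm Y l (phiv Y Vs l)}




section AuxLemmas
open Filter Topology

lemma exists_eigenvec {k : ℕ} {M : Matrix (Fin k) (Fin k) ℂ} {μ : ℂ}
    (h : μ ∈ spectrum ℂ M) : ∃ v : Fin k → ℂ, v ≠ 0 ∧ M *ᵥ v = μ • v := by
  rw [spectrum.mem_iff, Matrix.isUnit_iff_isUnit_det, isUnit_iff_ne_zero, not_not] at h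
  obtain ⟨v, hv0, hv⟩ := Matrix.exists_mulVec_eq_zero_iff.mpr h
  refine ⟨v, hv0, ?_⟩
  rw [Matrix.sub_mulVec] at hv
  have h1 : (algebraMap ℂ (Matrix (Fin k) (Fin k) ℂ)) μ *ᵥ v = μ • v := by
    rw [Algebra.algebraMap_eq_smul_one, Matrix.smul_mulVec, Matrix.one_mulVec]
  rw [h1] at hv
  exact (sub_eq_zero.mp hv).symm

lemma row_bound {k : ℕ} {A : Matrix (Fin k) (Fin k) ℝ} (hZ : IsZmat A)
    {v : Fin k → ℂ} {μ : ℂ} (heig : (A.map Complex.ofReal) *ᵥ v = μ • v) (i : Fin k) :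
    ‖μ - (A i i : ℂ)‖ * ‖v i‖ ≤ ∑ j ∈ Finset.univ.erase i, (-(A i j)) * ‖v j‖ := by
  have hrow : ∑ j, (A i j : ℂ) * v j = μ * v i := by
    have h := congrFun heig i
    simpa [Matrix.mulVec, dotProduct, Matrix.map_apply, Pi.smul_apply,
      smul_eq_mul] using h
  have hsplit : (μ - (A i i : ℂ)) * v i = ∑ j ∈ Finset.univ.erase i, (A i j : ℂ) * v j := by
    have h2 := Finset.add_sum_erase Finset.univ (fun j => (A i j : ℂ) * v j) (Finset.mem_univ i)
    rw [hrow] at h2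
    have : (A i i : ℂ) * v i + ∑ j ∈ Finset.univ.erase i, (A i j : ℂ) * v j = μ * v i := h2
    linear_combination -this
  calc ‖μ - (A i i : ℂ)‖ * ‖v i‖ = ‖(μ - (A i i : ℂ)) * v i‖ := (norm_mul _ _).symm
    _ = ‖∑ j ∈ Finset.univ.erase i, (A i j : ℂ) * v j‖ := by rw [hsplit]
    _ ≤ ∑ j ∈ Finset.univ.erase i, ‖(A i j : ℂ) * v j‖ := norm_sum_le _ _
    _ = ∑ j ∈ Finset.univ.erase i, (-(A i j)) * ‖v j‖ := by
        refine Finset.sum_congr rfl fun j hj => ?_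
        have hji : j ≠ i := Finset.ne_of_mem_erase hj
        rw [norm_mul, Complex.norm_real, Real.norm_eq_abs, abs_of_nonpos (hZ i j hji.symm)]

/-- key chain inequality at an index where the weighted max is achieved -/
lemma chain_bound {k : ℕ} {A : Matrix (Fin k) (Fin k) ℝ} (hZ : IsZmat A)
    {w : Fin k → ℝ} (hw : ∀ i, 0 < w i) {v : Fin k → ℂ} {μ : ℂ}
    (heig : (A.map Complex.ofReal) *ᵥ v = μ • v)
    {m : ℝ} (hble : ∀ j, ‖v j‖ ≤ m * w j) {i : Fin k} (hieq : ‖v i‖ = m * w i) :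
    ‖μ - (A i i : ℂ)‖ * (m * w i) ≤ m * (A i i * w i - (A *ᵥ w) i) ∧
    ∑ j ∈ Finset.univ.erase i, (-(A i j)) * ‖v j‖ ≤ m * (A i i * w i - (A *ᵥ w) i) ∧
    ‖μ - (A i i : ℂ)‖ * (m * w i) ≤ ∑ j ∈ Finset.univ.erase i, (-(A i j)) * ‖v j‖ := by
  have hAwi : (A *ᵥ w) i = A i i * w i + ∑ j ∈ Finset.univ.erase i, A i j * w j := by
    rw [Matrix.mulVec, dotProduct]
    exact (Finset.add_sum_erase Finset.univ (fun j => A i j * w j) (Finset.mem_univ i)).symm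
  have h1 : ‖μ - (A i i : ℂ)‖ * (m * w i)
      ≤ ∑ j ∈ Finset.univ.erase i, (-(A i j)) * ‖v j‖ := by
    rw [← hieq]; exact row_bound hZ heig i
  have h2 : ∑ j ∈ Finset.univ.erase i, (-(A i j)) * ‖v j‖
      ≤ ∑ j ∈ Finset.univ.erase i, (-(A i j)) * (m * w j) := by
    refine Finset.sum_le_sum fun j hj => ?_
    have hji : j ≠ i := Finset.ne_of_mem_erase hj
    exact mul_le_mul_of_nonneg_left (hble j) (neg_nonneg.mpr (hZ i j hji.symm))
  have h3 : ∑ j ∈ Finset.univ.erase i, (-(A i j)) * (m * w j)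
      = m * (A i i * w i - (A *ᵥ w) i) := by
    rw [hAwi]
    rw [show (fun j => (-(A i j)) * (m * w j)) = fun j => m * (-(A i j * w j)) from
      funext fun j => by ring]
    rw [← Finset.mul_sum, Finset.sum_neg_distrib]
    ring
  exact ⟨le_trans h1 (le_trans h2 h3.le), le_trans h2 h3.le, h1⟩

lemma max_setup {k : ℕ} {w : Fin k → ℝ} (hw : ∀ i, 0 < w i) {v : Fin k → ℂ} (hv0 : v ≠ 0) :
    ∃ m : ℝ, 0 < m ∧ (∀ j, ‖v j‖ ≤ m * w j) ∧ ∃ i, ‖v i‖ = m * w i := by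
  obtain ⟨j0, hj0⟩ := Function.ne_iff.mp hv0
  obtain ⟨i, -, hmax⟩ := Finset.exists_max_image Finset.univ (fun j => ‖v j‖ / w j)
    ⟨j0, Finset.mem_univ j0⟩
  refine ⟨‖v i‖ / w i, ?_, ?_, i, ?_⟩
  · calc (0:ℝ) < ‖v j0‖ / w j0 := div_pos (norm_pos_iff.mpr (by simpa using hj0)) (hw j0)
      _ ≤ ‖v i‖ / w i := hmax j0 (Finset.mem_univ j0)
  · intro j
    have := hmax j (Finset.mem_univ j)
    calc ‖v j‖ = ‖v j‖ / w j * w j := (div_mul_cancel₀ _ (hw j).ne').symm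
      _ ≤ ‖v i‖ / w i * w j := mul_le_mul_of_nonneg_right this (hw j).le
  · exact (div_mul_cancel₀ _ (hw i).ne').symm

/-- L1 : weak weighted Gershgorin -/
lemma eig_nonneg_of_weights {k : ℕ} {A : Matrix (Fin k) (Fin k) ℝ} (hZ : IsZmat A)
    {w : Fin k → ℝ} (hw : ∀ i, 0 < w i) (hAw : ∀ i, 0 ≤ (A *ᵥ w) i)
    {μ : ℂ} (hμ : μ ∈ spectrum ℂ (A.map Complex.ofReal)) :
    0 ≤ μ.re ∧ (μ.re = 0 → μ = 0) := by
  obtain ⟨v, hv0, heig⟩ := exists_eigenvec hμ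
  obtain ⟨m, hm, hble, i, hieq⟩ := max_setup hw hv0
  obtain ⟨key, -, -⟩ := chain_bound hZ hw heig hble hieq
  set a := A i i with ha_def
  have hmw : 0 < m * w i := mul_pos hm (hw i)
  have ha : 0 ≤ a := by
    nlinarith [norm_nonneg (μ - (a:ℂ)), hAw i, hw i, hmw]
  have hb : ‖μ - (a:ℂ)‖ ≤ a := by
    nlinarith [hAw i, hmw]
  have hsq : (μ.re - a)^2 + μ.im^2 ≤ a^2 := by
    have h1 : ‖μ - (a:ℂ)‖^2 ≤ a^2 := by
      nlinarith [norm_nonneg (μ - (a:ℂ))]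
    have h2 : ‖μ - (a:ℂ)‖^2 = (μ.re - a)^2 + μ.im^2 := by
      rw [Complex.sq_norm, Complex.normSq_apply]
      simp [Complex.sub_re, Complex.sub_im, Complex.ofReal_re, Complex.ofReal_im]
      ring
    rwa [h2] at h1
  constructor
  · by_contra hneg
    push_neg at hneg
    nlinarith [sq_nonneg μ.im, mul_nonneg ha (neg_nonneg.mpr hneg.le), mul_pos_of_neg_of_neg hneg hneg]
  · intro h0
    have him : μ.im = 0 := by nlinarith [sq_nonneg μ.im]
    exact Complex.ext h0 him

/-- L2 : Taussky-type strict result -/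
lemma eig_pos_of_weights {k : ℕ} {A : Matrix (Fin k) (Fin k) ℝ} (hZ : IsZmat A)
    (hirr : IsIrred A) {w : Fin k → ℝ} (hw : ∀ i, 0 < w i)
    (hAw : ∀ i, 0 ≤ (A *ᵥ w) i) (hne : A *ᵥ w ≠ 0)
    {μ : ℂ} (hμ : μ ∈ spectrum ℂ (A.map Complex.ofReal)) : 0 < μ.re := by
  classical
  by_contra hre
  push_neg at hre
  obtain ⟨v, hv0, heig⟩ := exists_eigenvec hμ
  obtain ⟨m, hm, hble, i0, hieq0⟩ := max_setup hw hv0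
  -- at every achieving index, row sum vanishes and achievement propagates
  have claim : ∀ i, ‖v i‖ = m * w i →
      (A *ᵥ w) i = 0 ∧ ∀ j, j ≠ i → A i j ≠ 0 → ‖v j‖ = m * w j := by
    intro i hieq
    obtain ⟨key, h23, h12⟩ := chain_bound hZ hw heig hble hieq
    set a := A i i with ha_def
    have hmw : 0 < m * w i := mul_pos hm (hw i)
    have ha : 0 ≤ a := by
      nlinarith [norm_nonneg (μ - (a:ℂ)), hAw i, hw i, hmw]
    have habs : a ≤ ‖μ - (a:ℂ)‖ := by
      have h1 : |(μ - (a:ℂ)).re| ≤ ‖μ - (a:ℂ)‖ := Complex.abs_re_le_norm _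
      have h2 : (μ - (a:ℂ)).re = μ.re - a := by
        simp [Complex.sub_re, Complex.ofReal_re]
      rw [h2] at h1
      have : a - μ.re ≤ |μ.re - a| := by
        rw [abs_sub_comm]; exact le_abs_self _
      linarith
    have hAwz : (A *ᵥ w) i = 0 := by
      have : a * (m * w i) ≤ m * (a * w i - (A *ᵥ w) i) :=
        le_trans (mul_le_mul_of_nonneg_right habs hmw.le) key
      have h4 : m * (A *ᵥ w) i ≤ 0 := by nlinarith
      have := hAw i
      nlinarith
    refine ⟨hAwz, fun j hj hAij => ?_⟩
    -- the middle inequalities collapse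
    have hsum_le : ∑ j ∈ Finset.univ.erase i, (-(A i j)) * (m * w j - ‖v j‖) ≤ 0 := by
      have hexp : ∑ j ∈ Finset.univ.erase i, (-(A i j)) * (m * w j - ‖v j‖)
          = ∑ j ∈ Finset.univ.erase i, (-(A i j)) * (m * w j)
            - ∑ j ∈ Finset.univ.erase i, (-(A i j)) * ‖v j‖ := by
        rw [← Finset.sum_sub_distrib]
        exact Finset.sum_congr rfl fun j _ => by ring
      have hup : ∑ j ∈ Finset.univ.erase i, (-(A i j)) * (m * w j)
          = m * (a * w i) := by
        -- from hAwz and the identity used in chain_bound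
        have hAwi : (A *ᵥ w) i = A i i * w i + ∑ j ∈ Finset.univ.erase i, A i j * w j := by
          rw [Matrix.mulVec, dotProduct]
          exact (Finset.add_sum_erase Finset.univ (fun j => A i j * w j)
            (Finset.mem_univ i)).symm
        have hsum0 : ∑ j ∈ Finset.univ.erase i, A i j * w j = -(a * w i) := by
          rw [hAwi] at hAwz; linarith
        calc ∑ j ∈ Finset.univ.erase i, (-(A i j)) * (m * w j)
            = m * ∑ j ∈ Finset.univ.erase i, -(A i j * w j) := by
              rw [Finset.mul_sum]; exact Finset.sum_congr rfl fun j _ => by ring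
          _ = m * (a * w i) := by rw [Finset.sum_neg_distrib, hsum0]; ring
      have hlow : m * (a * w i) ≤ ∑ j ∈ Finset.univ.erase i, (-(A i j)) * ‖v j‖ := by
        have := le_trans (mul_le_mul_of_nonneg_right habs (mul_pos hm (hw i)).le) h12
        nlinarith
      rw [hexp, hup]; linarith
    have hterm : ∀ j ∈ Finset.univ.erase i, 0 ≤ (-(A i j)) * (m * w j - ‖v j‖) := by
      intro j hj
      have hji : j ≠ i := Finset.ne_of_mem_erase hj
      exact mul_nonneg (neg_nonneg.mpr (hZ i j hji.symm)) (by linarith [hble j])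
    have hall := (Finset.sum_eq_zero_iff_of_nonneg hterm).mp
      (le_antisymm hsum_le (Finset.sum_nonneg hterm))
    have hj' := hall j (Finset.mem_erase.mpr ⟨hj, Finset.mem_univ j⟩)
    have : m * w j - ‖v j‖ = 0 := by
      rcases mul_eq_zero.mp hj' with h | h
      · exact absurd (neg_eq_zero.mp h) hAij
      · exact h
    linarith
  -- propagate over the achieving set
  set β : Finset (Fin k) := Finset.univ.filter (fun j => ‖v j‖ = m * w j) with hβ_def
  have hi0β : i0 ∈ β := Finset.mem_filter.mpr ⟨Finset.mem_univ _, hieq0⟩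
  by_cases hcase : β = Finset.univ
  · apply hne
    funext j
    have hjβ : j ∈ β := hcase ▸ Finset.mem_univ j
    have := (claim j (Finset.mem_filter.mp hjβ).2).1
    simpa using this
  · obtain ⟨i, hiβ, j, hjβc, hAij⟩ := hirr β ⟨i0, hi0β⟩ hcase
    have hjβ : j ∉ β := Finset.mem_compl.mp hjβc
    have hji : j ≠ i := fun h => hjβ (h ▸ hiβ)
    have := (claim i (Finset.mem_filter.mp hiβ).2).2 j hji hAij
    exact hjβ (Finset.mem_filter.mpr ⟨Finset.mem_univ j, this⟩)

/-- L3 : support lemma -/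
lemma pos_of_support {k : ℕ} {A : Matrix (Fin k) (Fin k) ℝ} (hZ : IsZmat A)
    (hirr : IsIrred A) {u : Fin k → ℝ} (hu : ∀ i, 0 ≤ u i) (hune : u ≠ 0)
    (hAu : ∀ i, 0 ≤ (A *ᵥ u) i) : ∀ i, 0 < u i := by
  classical
  by_contra hcon
  push_neg at hcon
  obtain ⟨i0, hi0⟩ := hcon
  have hi0z : u i0 = 0 := le_antisymm hi0 (hu i0)
  set α : Finset (Fin k) := Finset.univ.filter (fun i => u i = 0) with hα_def
  have hαne : α.Nonempty := ⟨i0, Finset.mem_filter.mpr ⟨Finset.mem_univ _, hi0z⟩⟩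
  have hαnu : α ≠ Finset.univ := by
    intro h
    apply hune
    funext j
    have : j ∈ α := h ▸ Finset.mem_univ j
    simpa using (Finset.mem_filter.mp this).2
  obtain ⟨i, hiα, j, hjαc, hAij⟩ := hirr α hαne hαnu
  have hiz : u i = 0 := (Finset.mem_filter.mp hiα).2
  have hjα : j ∉ α := Finset.mem_compl.mp hjαc
  have hjnz : u j ≠ 0 := by
    intro h; exact hjα (Finset.mem_filter.mpr ⟨Finset.mem_univ j, h⟩)
  have hterm : ∀ l ∈ Finset.univ, A i l * u l ≤ (0:ℝ) := by
    intro l _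
    by_cases hl : u l = 0
    · simp [hl]
    · have hli : l ≠ i := fun h => hl (h ▸ hiz)
      exact mul_nonpos_of_nonpos_of_nonneg (hZ i l hli.symm) (hu l)
  have hsum : (A *ᵥ u) i = ∑ l, A i l * u l := by
    rw [Matrix.mulVec, dotProduct]
  have hzero : ∑ l, A i l * u l = 0 :=
    le_antisymm (Finset.sum_nonpos hterm) (by rw [← hsum]; exact hAu i)
  have := (Finset.sum_eq_zero_iff_of_nonpos hterm).mp hzero j (Finset.mem_univ j)
  rcases mul_eq_zero.mp this with h | h
  · exact hAij h
  · exact hjnz h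

/-- L4 : inverse positivity upgrade -/
lemma inv_pos_of_inv_nonneg {k : ℕ} {A : Matrix (Fin k) (Fin k) ℝ} (hZ : IsZmat A)
    (hirr : IsIrred A) (hdet : IsUnit A.det)
    (hinv : ∀ i j, 0 ≤ A⁻¹ i j) : ∀ i j, 0 < A⁻¹ i j := by
  intro i j
  have hAA : A * A⁻¹ = 1 := Matrix.mul_nonsing_inv A hdet
  have hcol : A *ᵥ (fun l => A⁻¹ l j) = fun l => (1 : Matrix (Fin k) (Fin k) ℝ) l j := by
    funext l
    have : (A * A⁻¹) l j = (1 : Matrix (Fin k) (Fin k) ℝ) l j := by rw [hAA]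
    rw [← this, Matrix.mul_apply]
    rw [Matrix.mulVec, dotProduct]
  have hune : (fun l => A⁻¹ l j) ≠ 0 := by
    intro h
    have h2 : A *ᵥ (fun l => A⁻¹ l j) = 0 := by rw [h]; exact Matrix.mulVec_zero A
    rw [hcol] at h2
    have := congrFun h2 j
    simp [Matrix.one_apply] at this
  have hAu : ∀ l, 0 ≤ (A *ᵥ fun l => A⁻¹ l j) l := by
    intro l
    rw [hcol]
    by_cases h : l = j <;> simp [Matrix.one_apply, h]
  exact pos_of_support hZ hirr (fun l => hinv l j) hune hAu i

lemma spec_shift {k : ℕ} (M : Matrix (Fin k) (Fin k) ℂ) (t : ℂ) (μ : ℂ) :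
    μ ∈ spectrum ℂ (M + t • (1 : Matrix (Fin k) (Fin k) ℂ)) ↔ μ - t ∈ spectrum ℂ M := by
  have heq : (algebraMap ℂ (Matrix (Fin k) (Fin k) ℂ)) μ
      - (M + t • (1 : Matrix (Fin k) (Fin k) ℂ))
      = (algebraMap ℂ (Matrix (Fin k) (Fin k) ℂ)) (μ - t) - M := by
    rw [Algebra.algebraMap_eq_smul_one, Algebra.algebraMap_eq_smul_one, sub_smul]
    abel
  rw [spectrum.mem_iff, heq, ← spectrum.mem_iff]

lemma map_shift {k : ℕ} (A : Matrix (Fin k) (Fin k) ℝ) (t : ℝ) :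
    ((A + t • (1 : Matrix (Fin k) (Fin k) ℝ)).map Complex.ofReal)
      = A.map Complex.ofReal + (t : ℂ) • (1 : Matrix (Fin k) (Fin k) ℂ) := by
  ext i j
  by_cases h : i = j <;>
    simp [Matrix.map_apply, Matrix.add_apply, Matrix.smul_apply, Matrix.one_apply, h]

lemma det_map_ofReal {k : ℕ} (A : Matrix (Fin k) (Fin k) ℝ) :
    (A.map Complex.ofReal).det = ((A.det : ℝ) : ℂ) := by
  have := RingHom.map_det Complex.ofRealHom A
  exact this.symm

lemma zero_mem_spec_of_det_eq_zero {k : ℕ} {A : Matrix (Fin k) (Fin k) ℝ}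
    (h : A.det = 0) : (0 : ℂ) ∈ spectrum ℂ (A.map Complex.ofReal) := by
  rw [spectrum.zero_mem_iff, Matrix.isUnit_iff_isUnit_det, det_map_ofReal, h]
  simp

lemma det_eq_zero_of_zero_mem_spec {k : ℕ} {A : Matrix (Fin k) (Fin k) ℝ}
    (h : (0 : ℂ) ∈ spectrum ℂ (A.map Complex.ofReal)) : A.det = 0 := by
  rw [spectrum.zero_mem_iff, Matrix.isUnit_iff_isUnit_det, det_map_ofReal] at h
  rw [isUnit_iff_ne_zero, not_not] at h
  exact_mod_cast h

/-- along the path `A + t•1`, `t ≥ 0`, determinants stay nonzero -/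
lemma unit_along_path {k : ℕ} {A : Matrix (Fin k) (Fin k) ℝ}
    (heig : ∀ μ ∈ spectrum ℂ (A.map Complex.ofReal), 0 < μ.re)
    {t : ℝ} (ht : 0 ≤ t) : IsUnit (A + t • (1 : Matrix (Fin k) (Fin k) ℝ)).det := by
  rw [isUnit_iff_ne_zero]
  intro h
  have h0 := zero_mem_spec_of_det_eq_zero h
  rw [map_shift, spec_shift] at h0
  have := heig _ h0
  simp at this
  linarith

/-- Neumann series seed : far along the diagonal path the inverse is nonneg -/
lemma neumann_seed {k : ℕ} {A : Matrix (Fin k) (Fin k) ℝ} (hZ : IsZmat A) :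
    ∃ T : ℝ, 0 < T ∧ ∀ i j, 0 ≤ (A + T • (1 : Matrix (Fin k) (Fin k) ℝ))⁻¹ i j := by
  classical
  set d : ℝ := 1 + ∑ i, |A i i| with hd_def
  have hd : ∀ i, A i i ≤ d := by
    intro i
    have h1 : |A i i| ≤ ∑ l, |A l l| :=
      Finset.single_le_sum (fun l _ => abs_nonneg (A l l)) (Finset.mem_univ i)
    have := le_abs_self (A i i)
    simp only [hd_def]; linarith
  set B : Matrix (Fin k) (Fin k) ℝ := d • (1 : Matrix (Fin k) (Fin k) ℝ) - A with hB_def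
  have hB0 : ∀ i j, 0 ≤ B i j := by
    intro i j
    simp only [hB_def, Matrix.sub_apply, Matrix.smul_apply, Matrix.one_apply]
    by_cases h : i = j
    · subst h; simp; linarith [hd i]
    · simp [h]; exact hZ i j h
  set bB : ℝ := 1 + ∑ i, ∑ j, B i j with hbB_def
  have hbB1 : 1 ≤ bB := by
    have : (0:ℝ) ≤ ∑ i, ∑ j, B i j :=
      Finset.sum_nonneg fun i _ => Finset.sum_nonneg fun j _ => hB0 i j
    simp only [hbB_def]; linarith
  have hcolB : ∀ j, ∑ l, B l j ≤ bB := by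
    intro j
    have h1 : ∑ l, B l j ≤ ∑ l, ∑ j', B l j' := by
      refine Finset.sum_le_sum fun l _ => ?_
      exact Finset.single_le_sum (fun j' _ => hB0 l j') (Finset.mem_univ j)
    simp only [hbB_def]; linarith
  have hpow : ∀ m : ℕ, (∀ i j, 0 ≤ (B ^ m) i j) ∧ (∀ i j, (B ^ m) i j ≤ bB ^ m) := by
    intro m
    induction m with
    | zero =>
      constructor <;> intro i j <;> simp [Matrix.one_apply] <;> by_cases h : i = j <;>
        simp [h]
    | succ m ih =>
      have hstep : B ^ (m + 1) = B ^ m * B := pow_succ B m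
      constructor
      · intro i j
        rw [hstep, Matrix.mul_apply]
        exact Finset.sum_nonneg fun l _ => mul_nonneg (ih.1 i l) (hB0 l j)
      · intro i j
        rw [hstep, Matrix.mul_apply]
        calc ∑ l, (B ^ m) i l * B l j ≤ ∑ l, bB ^ m * B l j := by
              refine Finset.sum_le_sum fun l _ => ?_
              exact mul_le_mul_of_nonneg_right (ih.2 i l) (hB0 l j)
          _ = bB ^ m * ∑ l, B l j := by rw [Finset.mul_sum]
          _ ≤ bB ^ m * bB := by
              refine mul_le_mul_of_nonneg_left (hcolB j) ?_
              positivity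
          _ = bB ^ (m + 1) := by rw [pow_succ]
  set c : ℝ := 2 * bB + d with hc_def
  have hd0 : 0 < d := by
    have : (0:ℝ) ≤ ∑ i, |A i i| := Finset.sum_nonneg fun i _ => abs_nonneg _
    simp only [hd_def]; linarith
  have hc0 : 0 < c := by simp only [hc_def]; linarith
  have hbc : bB < c := by simp only [hc_def]; linarith
  set r : ℝ := bB / c with hr_def
  have hr0 : 0 ≤ r := div_nonneg (by linarith) hc0.le
  have hr1 : r < 1 := (div_lt_one hc0).mpr hbc
  have hc1 : 1 ≤ c := by linarith
  have hbound : ∀ (m : ℕ) i j, (B ^ m) i j / c ^ (m + 1) ≤ r ^ m := by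
    intro m i j
    calc (B ^ m) i j / c ^ (m + 1) ≤ bB ^ m / c ^ m :=
          div_le_div₀ (pow_nonneg (by linarith) m) ((hpow m).2 i j) (by positivity)
            (pow_le_pow_right₀ hc1 (Nat.le_succ m))
      _ = r ^ m := (div_pow bB c m).symm
  have hbound' : ∀ (m : ℕ) i j, (B ^ m) i j / c ^ m ≤ r ^ m := by
    intro m i j
    calc (B ^ m) i j / c ^ m ≤ bB ^ m / c ^ m :=
          div_le_div₀ (pow_nonneg (by linarith) m) ((hpow m).2 i j) (by positivity) le_rfl
      _ = r ^ m := (div_pow bB c m).symm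
  have hnn1 : ∀ (m : ℕ) i j, 0 ≤ (B ^ m) i j / c ^ (m + 1) := by
    intro m i j; exact div_nonneg ((hpow m).1 i j) (by positivity)
  have hnn' : ∀ (m : ℕ) i j, 0 ≤ (B ^ m) i j / c ^ m := by
    intro m i j; exact div_nonneg ((hpow m).1 i j) (by positivity)
  have hsum1 : ∀ i j, Summable (fun m : ℕ => (B ^ m) i j / c ^ (m + 1)) := by
    intro i j
    exact Summable.of_nonneg_of_le (fun m => hnn1 m i j) (fun m => hbound m i j)
      (summable_geometric_of_lt_one hr0 hr1)
  have hsum' : ∀ i j, Summable (fun m : ℕ => (B ^ m) i j / c ^ m) := by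
    intro i j
    exact Summable.of_nonneg_of_le (fun m => hnn' m i j) (fun m => hbound' m i j)
      (summable_geometric_of_lt_one hr0 hr1)
  set N : Matrix (Fin k) (Fin k) ℝ :=
    Matrix.of (fun i j => ∑' m : ℕ, (B ^ m) i j / c ^ (m + 1)) with hN_def
  have hN0 : ∀ i j, 0 ≤ N i j := by
    intro i j
    exact tsum_nonneg (fun m => hnn1 m i j)
  have hmulBN : ∀ i j, (B * N) i j = ∑' m : ℕ, (B ^ (m + 1)) i j / c ^ (m + 1) := by
    intro i j
    rw [Matrix.mul_apply]
    have h1 : ∀ l, B i l * N l j = ∑' m : ℕ, B i l * ((B ^ m) l j / c ^ (m + 1)) := by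
      intro l
      exact (Summable.tsum_mul_left _ (hsum1 l j)).symm
    calc ∑ l, B i l * N l j = ∑ l, ∑' m : ℕ, B i l * ((B ^ m) l j / c ^ (m + 1)) :=
          Finset.sum_congr rfl fun l _ => h1 l
      _ = ∑' m : ℕ, ∑ l, B i l * ((B ^ m) l j / c ^ (m + 1)) := by
          refine (Summable.tsum_finsetSum fun l _ => ?_).symm
          exact (hsum1 l j).mul_left _
      _ = ∑' m : ℕ, (B ^ (m + 1)) i j / c ^ (m + 1) := by
          refine tsum_congr fun m => ?_
          have : (B ^ (m + 1)) i j = ∑ l, B i l * (B ^ m) l j := by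
            rw [pow_succ']
            rw [Matrix.mul_apply]
          rw [this, Finset.sum_div]
          exact Finset.sum_congr rfl fun l _ => by ring
  have hcN : ∀ i j, c * N i j = ∑' m : ℕ, (B ^ m) i j / c ^ m := by
    intro i j
    rw [show N i j = ∑' m : ℕ, (B ^ m) i j / c ^ (m + 1) from rfl,
      ← Summable.tsum_mul_left c (hsum1 i j)]
    refine tsum_congr fun m => ?_
    rw [pow_succ]
    field_simp
  have hright : (c • (1 : Matrix (Fin k) (Fin k) ℝ) - B) * N = 1 := by
    ext i j
    rw [Matrix.sub_mul, Matrix.smul_mul, Matrix.one_mul, Matrix.sub_apply, Matrix.smul_apply,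
      smul_eq_mul, hcN i j, hmulBN i j, Summable.tsum_eq_zero_add (hsum' i j)]
    simp only [pow_zero, div_one]
    rw [add_sub_cancel_right]
  have hform : A + (2 * bB) • (1 : Matrix (Fin k) (Fin k) ℝ)
      = c • (1 : Matrix (Fin k) (Fin k) ℝ) - B := by
    rw [hB_def, hc_def, add_smul]
    module
  refine ⟨2 * bB, by linarith, ?_⟩
  have hinv : (A + (2 * bB) • (1 : Matrix (Fin k) (Fin k) ℝ))⁻¹ = N := by
    rw [hform]
    exact Matrix.inv_eq_right_inv hright
  rw [hinv]
  exact hN0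

/-- L5 : irreducible Z-matrix with spectrum in the open right half plane has positive inverse -/
lemma inv_pos_of_eig_pos {k : ℕ} {A : Matrix (Fin k) (Fin k) ℝ} (hZ : IsZmat A)
    (hirr : IsIrred A)
    (heig : ∀ μ ∈ spectrum ℂ (A.map Complex.ofReal), 0 < μ.re) :
    IsUnit A.det ∧ ∀ i j, 0 < A⁻¹ i j := by
  classical
  set At : ℝ → Matrix (Fin k) (Fin k) ℝ :=
    fun t => A + t • (1 : Matrix (Fin k) (Fin k) ℝ) with hAt_def
  have hoff : ∀ t i j, i ≠ j → At t i j = A i j := by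
    intro t i j hij
    simp [hAt_def, Matrix.add_apply, Matrix.smul_apply, Matrix.one_apply, hij]
  have hZt : ∀ t, IsZmat (At t) := by
    intro t i j hij; rw [hoff t i j hij]; exact hZ i j hij
  have hirrt : ∀ t, IsIrred (At t) := by
    intro t α hne hnu
    obtain ⟨i, hi, j, hj, hij⟩ := hirr α hne hnu
    have : i ≠ j := by
      intro h; subst h; exact (Finset.mem_compl.mp hj) hi
    exact ⟨i, hi, j, hj, by rw [hoff t i j this]; exact hij⟩
  have hunit : ∀ t : ℝ, 0 ≤ t → IsUnit (At t).det := fun t ht => unit_along_path heig ht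
  -- continuity of the inverse entries on [0, ∞)
  set e : Fin k → Fin k → ℝ → ℝ := fun i j t => (At t)⁻¹ i j with he_def
  have hcontM : Continuous At := by
    exact continuous_const.add (continuous_id.smul continuous_const)
  have he : ∀ i j, ContinuousOn (e i j) (Ici 0) := by
    intro i j
    have hform : e i j = fun t => ((At t).det)⁻¹ * (At t).adjugate i j := by
      funext t
      rw [he_def]
      simp only
      rw [Matrix.inv_def, Matrix.smul_apply, Ring.inverse_eq_inv', smul_eq_mul]
    rw [hform]
    have hdet : Continuous fun t => (At t).det := hcontM.matrix_det
    have hadj : Continuous fun t => (At t).adjugate i j :=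
      (continuous_apply j).comp ((continuous_apply i).comp hcontM.matrix_adjugate)
    refine ContinuousOn.mul ?_ hadj.continuousOn
    exact ContinuousOn.inv₀ hdet.continuousOn
      (fun t ht => isUnit_iff_ne_zero.mp (hunit t ht))
  -- the two relatively open pieces of (0,∞)
  set U : Set ℝ := ⋂ p : Fin k × Fin k, (Ioi 0 ∩ (e p.1 p.2) ⁻¹' (Ioi 0)) with hU_def
  set V : Set ℝ := ⋃ p : Fin k × Fin k, (Ioi 0 ∩ (e p.1 p.2) ⁻¹' (Iio 0)) with hV_def
  have hUopen : IsOpen U := by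
    refine isOpen_iInter_of_finite fun p => ?_
    exact ((he p.1 p.2).mono Ioi_subset_Ici_self).isOpen_inter_preimage isOpen_Ioi isOpen_Ioi
  have hVopen : IsOpen V := by
    refine isOpen_iUnion fun p => ?_
    exact ((he p.1 p.2).mono Ioi_subset_Ici_self).isOpen_inter_preimage isOpen_Ioi isOpen_Iio
  have hdisj : Disjoint U V := by
    rw [Set.disjoint_left]
    intro t htU htV
    obtain ⟨p, -, hp⟩ := Set.mem_iUnion.mp htV
    have := (Set.mem_iInter.mp htU p).2
    exact absurd (Set.mem_preimage.mp this) (by simpa using le_of_lt hp)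
  have hcover : Ioi (0:ℝ) ⊆ U ∪ V := by
    intro t ht
    by_cases hall : ∀ i j, 0 ≤ e i j t
    · left
      refine Set.mem_iInter.mpr fun p => ⟨ht, ?_⟩
      exact inv_pos_of_inv_nonneg (hZt t) (hirrt t) (hunit t (le_of_lt ht)) hall p.1 p.2
    · right
      push_neg at hall
      obtain ⟨i, j, hij⟩ := hall
      exact Set.mem_iUnion.mpr ⟨(i, j), ht, hij⟩
  obtain ⟨T, hT0, hTnn⟩ := neumann_seed hZ
  have hTU : T ∈ U := by
    refine Set.mem_iInter.mpr fun p => ⟨hT0, ?_⟩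
    exact inv_pos_of_inv_nonneg (hZt T) (hirrt T) (hunit T hT0.le) hTnn p.1 p.2
  have hsub : Ioi (0:ℝ) ⊆ U := by
    rcases (isPreconnected_Ioi).subset_or_subset hUopen hVopen hdisj hcover with h | h
    · exact h
    · exfalso
      exact Set.disjoint_left.mp hdisj hTU (h hT0)
  have hpos : ∀ t : ℝ, 0 < t → ∀ i j, 0 < e i j t := by
    intro t ht i j
    exact (Set.mem_iInter.mp (hsub ht) (i, j)).2
  -- pass to the limit t → 0⁺
  have hnn0 : ∀ i j, 0 ≤ e i j 0 := by
    intro i j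
    have htend : Tendsto (e i j) (nhdsWithin 0 (Ioi 0)) (nhds (e i j 0)) :=
      ((he i j) 0 Set.self_mem_Ici).mono_left (nhdsWithin_mono 0 Ioi_subset_Ici_self)
    refine ge_of_tendsto htend ?_
    exact eventually_nhdsWithin_of_forall (fun t ht => (hpos t ht i j).le)
  have hA0 : At 0 = A := by simp [hAt_def]
  have hdetA : IsUnit A.det := by
    have := hunit 0 le_rfl
    rwa [hA0] at this
  refine ⟨hdetA, ?_⟩
  have : ∀ i j, 0 ≤ A⁻¹ i j := by
    intro i j
    have h := hnn0 i j
    simp only [he_def, hA0] at h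
    exact h
  exact inv_pos_of_inv_nonneg hZ hirr hdetA this

end AuxLemmas

section Problem
open Filter Topology
variable {n : ℕ} {Y : Matrix (Fin n) (Fin n) ℝ} {Vs : Fin n → ℝ}

lemma Jneg_apply (Y : Matrix (Fin n) (Fin n) ℝ) (Vs x : Fin n → ℝ) (i j : Fin n) :
    (-(Jmat Y Vs x)) i j
      = x i * Y i j - (if i = j then (Y *ᵥ (Vs - x)) i else 0) := by
  simp only [Jmat, Matrix.neg_apply, Matrix.sub_apply, Matrix.diagonal_apply,
    Matrix.diagonal_mul]
  by_cases h : i = j <;> simp [h] <;> ring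

lemma Jneg_apply_ne (Y : Matrix (Fin n) (Fin n) ℝ) (Vs x : Fin n → ℝ) {i j : Fin n}
    (hij : i ≠ j) : (-(Jmat Y Vs x)) i j = x i * Y i j := by
  rw [Jneg_apply]; simp [hij]

lemma Jneg_apply_diag (Y : Matrix (Fin n) (Fin n) ℝ) (Vs x : Fin n → ℝ) (i : Fin n) :
    (-(Jmat Y Vs x)) i i = x i * Y i i - (Y *ᵥ (Vs - x)) i := by
  rw [Jneg_apply]; simp

lemma Jneg_Zmat (hZ : IsZmat Y) {x : Fin n → ℝ} (hx : ∀ i, 0 ≤ x i) :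
    IsZmat (-(Jmat Y Vs x)) := by
  intro i j hij
  rw [Jneg_apply_ne Y Vs x hij]
  exact mul_nonpos_of_nonneg_of_nonpos (hx i) (hZ i j hij)

lemma Jneg_Irred (hirr : IsIrred Y) {x : Fin n → ℝ} (hx : ∀ i, 0 < x i) :
    IsIrred (-(Jmat Y Vs x)) := by
  intro α hne hnu
  obtain ⟨i, hi, j, hj, hij⟩ := hirr α hne hnu
  have hij' : i ≠ j := fun h => (Finset.mem_compl.mp hj) (h ▸ hi)
  refine ⟨i, hi, j, hj, ?_⟩
  rw [Jneg_apply_ne Y Vs x hij']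
  exact mul_ne_zero (hx i).ne' hij

lemma Jneg_scale (Y : Matrix (Fin n) (Fin n) ℝ) (Vs x : Fin n → ℝ) (t : ℝ) :
    -(Jmat Y Vs (t • x))
      = t • (-(Jmat Y Vs x)) + (t - 1) • Matrix.diagonal (Y *ᵥ Vs) := by
  ext i j
  have hmv : (Y *ᵥ (Vs - t • x)) i = (Y *ᵥ Vs) i - t * (Y *ᵥ x) i := by
    rw [Matrix.mulVec_sub, Matrix.mulVec_smul]
    simp
  have hmv2 : (Y *ᵥ (Vs - x)) i = (Y *ᵥ Vs) i - (Y *ᵥ x) i := by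
    rw [Matrix.mulVec_sub]; simp
  simp only [Matrix.add_apply, Matrix.smul_apply, smul_eq_mul]
  rw [Jneg_apply, Jneg_apply, hmv, hmv2]
  by_cases h : i = j <;> simp [Matrix.diagonal_apply, h, Pi.smul_apply, smul_eq_mul] <;> ring

/-- diagonal entries of an inverse-positive Z-matrix are positive -/
lemma diag_pos {k : ℕ} {A : Matrix (Fin k) (Fin k) ℝ} (hZ : IsZmat A)
    (hdet : IsUnit A.det) (hinv : ∀ i j, 0 < A⁻¹ i j) : ∀ i, 0 < A i i := by
  intro i
  have h1 : (A * A⁻¹) i i = 1 := by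
    rw [Matrix.mul_nonsing_inv A hdet, Matrix.one_apply_eq]
  rw [Matrix.mul_apply] at h1
  have hsplit : A i i * A⁻¹ i i
      + ∑ j ∈ Finset.univ.erase i, A i j * A⁻¹ j i = 1 := by
    rw [Finset.add_sum_erase Finset.univ (fun j => A i j * A⁻¹ j i) (Finset.mem_univ i)]
    exact h1
  have hnp : ∑ j ∈ Finset.univ.erase i, A i j * A⁻¹ j i ≤ 0 := by
    refine Finset.sum_nonpos fun j hj => ?_
    have hji : j ≠ i := Finset.ne_of_mem_erase hj
    exact mul_nonpos_of_nonpos_of_nonneg (hZ i j hji.symm) (hinv j i).le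
  have h2 : 1 ≤ A i i * A⁻¹ i i := by linarith
  by_contra hcon
  push_neg at hcon
  nlinarith [hinv i i]

lemma neg_inv_matrix {k : ℕ} (M : Matrix (Fin k) (Fin k) ℝ) : (-M)⁻¹ = -(M⁻¹) := by
  by_cases h : IsUnit M.det
  · apply Matrix.inv_eq_right_inv
    rw [neg_mul_neg, Matrix.mul_nonsing_inv _ h]
  · have h2 : ¬IsUnit (-M).det := by
      intro hu
      rw [Matrix.det_neg, isUnit_iff_ne_zero, mul_ne_zero_iff] at hu
      exact h (isUnit_iff_ne_zero.mpr hu.2)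
    rw [Matrix.nonsing_inv_apply_not_isUnit _ h2, Matrix.nonsing_inv_apply_not_isUnit _ h,
      neg_zero]

lemma det_neg_isUnit_iff {k : ℕ} (M : Matrix (Fin k) (Fin k) ℝ) :
    IsUnit (-M).det ↔ IsUnit M.det := by
  rw [Matrix.det_neg, isUnit_iff_ne_zero, isUnit_iff_ne_zero, mul_ne_zero_iff]
  constructor
  · exact fun h => h.2
  · intro h
    refine ⟨?_, h⟩
    positivity
end Problem
section Problem2
open Filter Topology
variable {n : ℕ}

/-- characterization of `Dset` via spectra -/
lemma Dset_char {Y : Matrix (Fin n) (Fin n) ℝ} {Vs : Fin n → ℝ} (hn : 1 ≤ n)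
    (hZ : IsZmat Y) (hirr : IsIrred Y) (x : Fin n → ℝ) :
    x ∈ Dset Y Vs ↔ ((∀ i, 0 < x i) ∧
      ∀ μ ∈ spectrum ℂ ((-(Jmat Y Vs x)).map Complex.ofReal), 0 < μ.re) := by
  have i0 : Fin n := ⟨0, hn⟩
  constructor
  · rintro ⟨hx, hdetJ, hinvJ⟩
    refine ⟨hx, ?_⟩
    set A : Matrix (Fin n) (Fin n) ℝ := -(Jmat Y Vs x) with hA_def
    have hdetA : IsUnit A.det := (det_neg_isUnit_iff _).mpr hdetJ
    have hinvA : ∀ i j, 0 < A⁻¹ i j := by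
      intro i j
      rw [hA_def, neg_inv_matrix]
      simpa using hinvJ i j
    set w : Fin n → ℝ := A⁻¹ *ᵥ (fun _ => (1:ℝ)) with hw_def
    have hw : ∀ i, 0 < w i := by
      intro i
      rw [hw_def]
      simp only [Matrix.mulVec, dotProduct, mul_one]
      exact Finset.sum_pos (fun j _ => hinvA i j) ⟨i0, Finset.mem_univ i0⟩
    have hAw : A *ᵥ w = (fun _ => (1:ℝ)) := by
      rw [hw_def, Matrix.mulVec_mulVec, Matrix.mul_nonsing_inv _ hdetA, Matrix.one_mulVec]
    intro μ hμ
    refine eig_pos_of_weights (Jneg_Zmat hZ (fun i => (hx i).le)) (Jneg_Irred hirr hx)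
      hw ?_ ?_ hμ
    · intro i; rw [hAw]; norm_num
    · rw [hAw]
      intro h
      have := congrFun h i0
      norm_num at this
  · rintro ⟨hx, heig⟩
    obtain ⟨hdetA, hinvA⟩ := inv_pos_of_eig_pos (Jneg_Zmat hZ (fun i => (hx i).le))
      (Jneg_Irred hirr hx) heig
    refine ⟨hx, (det_neg_isUnit_iff _).mp hdetA, ?_⟩
    intro i j
    have h1 : (-(Jmat Y Vs x))⁻¹ = -((Jmat Y Vs x)⁻¹) := neg_inv_matrix _
    have h2 := hinvA i j
    rw [h1] at h2
    simpa using h2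

/-- positive diagonal on Dset -/
lemma Dset_diag_pos {Y : Matrix (Fin n) (Fin n) ℝ} {Vs : Fin n → ℝ}
    (hZ : IsZmat Y) {x : Fin n → ℝ} (hx : x ∈ Dset Y Vs) :
    ∀ i, 0 < (-(Jmat Y Vs x)) i i := by
  obtain ⟨hxp, hdetJ, hinvJ⟩ := hx
  refine diag_pos (Jneg_Zmat hZ (fun i => (hxp i).le)) ((det_neg_isUnit_iff _).mpr hdetJ) ?_
  intro i j
  rw [neg_inv_matrix]
  simpa using hinvJ i j

/-- the normalized positive row-vector witness on Dset -/
lemma Dset_witness {Y : Matrix (Fin n) (Fin n) ℝ} {Vs : Fin n → ℝ} (hn : 1 ≤ n)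
    {x : Fin n → ℝ} (hx : x ∈ Dset Y Vs) :
    ∃ u ∈ stdSimplex ℝ (Fin n), ∀ i, 0 ≤ ((-(Jmat Y Vs x)) *ᵥ u) i := by
  have i0 : Fin n := ⟨0, hn⟩
  obtain ⟨hxp, hdetJ, hinvJ⟩ := hx
  set A : Matrix (Fin n) (Fin n) ℝ := -(Jmat Y Vs x) with hA_def
  have hdetA : IsUnit A.det := (det_neg_isUnit_iff _).mpr hdetJ
  have hinvA : ∀ i j, 0 < A⁻¹ i j := by
    intro i j
    rw [hA_def, neg_inv_matrix]
    simpa using hinvJ i j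
  set w : Fin n → ℝ := A⁻¹ *ᵥ (fun _ => (1:ℝ)) with hw_def
  have hw : ∀ i, 0 < w i := by
    intro i
    rw [hw_def]
    simp only [Matrix.mulVec, dotProduct, mul_one]
    exact Finset.sum_pos (fun j _ => hinvA i j) ⟨i0, Finset.mem_univ i0⟩
  have hAw : A *ᵥ w = (fun _ => (1:ℝ)) := by
    rw [hw_def, Matrix.mulVec_mulVec, Matrix.mul_nonsing_inv _ hdetA, Matrix.one_mulVec]
  set s : ℝ := ∑ i, w i with hs_def
  have hs : 0 < s := Finset.sum_pos (fun i _ => hw i) ⟨i0, Finset.mem_univ i0⟩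
  refine ⟨s⁻¹ • w, ⟨fun i => ?_, ?_⟩, fun i => ?_⟩
  · exact mul_nonneg (inv_nonneg.mpr hs.le) (hw i).le
  · simp only [Pi.smul_apply, smul_eq_mul]
    rw [← Finset.mul_sum, ← hs_def]
    field_simp
  · rw [Matrix.mulVec_smul, hAw]
    simp only [Pi.smul_apply, smul_eq_mul, mul_one]
    positivity
end Problem2
section Problem3
open Filter Topology
variable {n : ℕ}

lemma Jmat_cont (Y : Matrix (Fin n) (Fin n) ℝ) (Vs : Fin n → ℝ) :
    Continuous fun x : Fin n → ℝ => Jmat Y Vs x := by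
  refine continuous_matrix fun i j => ?_
  have hmv : Continuous fun x : Fin n → ℝ => (Y *ᵥ (Vs - x)) i := by
    simp only [Matrix.mulVec, dotProduct]
    refine continuous_finset_sum _ fun l _ => ?_
    exact continuous_const.mul (continuous_const.sub (continuous_apply l))
  have hentry : (fun x : Fin n → ℝ => Jmat Y Vs x i j)
      = fun x => (if i = j then (Y *ᵥ (Vs - x)) i else 0) - x i * Y i j := by
    funext x
    simp only [Jmat, Matrix.sub_apply, Matrix.diagonal_apply, Matrix.diagonal_mul]
  rw [hentry]
  by_cases h : i = j
  · subst h
    rw [show (fun x : Fin n → ℝ => (if i = i then (Y *ᵥ (Vs - x)) i else 0) - x i * Y i i)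
      = fun x => (Y *ᵥ (Vs - x)) i - x i * Y i i from funext fun x => by rw [if_pos rfl]]
    exact hmv.sub ((continuous_apply i).mul continuous_const)
  · simp only [h, if_false]
    exact continuous_const.sub ((continuous_apply i).mul continuous_const)

lemma Dset_open (Y : Matrix (Fin n) (Fin n) ℝ) (Vs : Fin n → ℝ) :
    IsOpen (Dset Y Vs) := by
  classical
  set Sdet : Set (Fin n → ℝ) := {x | (Jmat Y Vs x).det ≠ 0} with hSdet_def
  have hdetc : Continuous fun x : Fin n → ℝ => (Jmat Y Vs x).det :=
    (Jmat_cont Y Vs).matrix_det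
  have hSdet_open : IsOpen Sdet := by
    have : Sdet = (fun x : Fin n → ℝ => (Jmat Y Vs x).det) ⁻¹' ({0}ᶜ) := rfl
    rw [this]
    exact hdetc.isOpen_preimage _ (isOpen_compl_iff.mpr isClosed_singleton)
  set g : Fin n × Fin n → (Fin n → ℝ) → ℝ :=
    fun p x => (Jmat Y Vs x)⁻¹ p.1 p.2 with hg_def
  have hgform : ∀ p, g p = fun x => ((Jmat Y Vs x).det)⁻¹ * (Jmat Y Vs x).adjugate p.1 p.2 := by
    intro p
    funext x
    rw [hg_def]
    simp only
    rw [Matrix.inv_def, Matrix.smul_apply, Ring.inverse_eq_inv', smul_eq_mul]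
  have hgcont : ∀ p, ContinuousOn (g p) Sdet := by
    intro p
    rw [hgform p]
    refine ContinuousOn.mul (hdetc.continuousOn.inv₀ fun x hx => hx) ?_
    exact ((continuous_apply p.2).comp ((continuous_apply p.1).comp
      (Jmat_cont Y Vs).matrix_adjugate)).continuousOn
  have hDeq : Dset Y Vs = (⋂ i, {x : Fin n → ℝ | 0 < x i}) ∩
      (Sdet ∩ ⋂ p : Fin n × Fin n, (Sdet ∩ (g p) ⁻¹' (Iio 0))) := by
    ext x
    constructor
    · rintro ⟨hx, hdet, hinv⟩
      have hd : x ∈ Sdet := isUnit_iff_ne_zero.mp hdet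
      exact ⟨Set.mem_iInter.mpr fun i => hx i,
        hd, Set.mem_iInter.mpr fun p => ⟨hd, hinv p.1 p.2⟩⟩
    · rintro ⟨hx, hd, hinv⟩
      refine ⟨fun i => Set.mem_iInter.mp hx i, isUnit_iff_ne_zero.mpr hd, fun i j => ?_⟩
      exact (Set.mem_iInter.mp hinv (i, j)).2
  rw [hDeq]
  refine IsOpen.inter (isOpen_iInter_of_finite fun i => ?_) (IsOpen.inter hSdet_open
    (isOpen_iInter_of_finite fun p => ?_))
  · exact isOpen_lt continuous_const (continuous_apply i)
  · exact (hgcont p).isOpen_inter_preimage hSdet_open isOpen_Iio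
end Problem3
section Problem4
open Filter Topology
variable {n : ℕ}

lemma closure_Dset_subset {Y : Matrix (Fin n) (Fin n) ℝ} {Vs : Fin n → ℝ}
    (hn : 1 ≤ n) (hZ : IsZmat Y) (hirr : IsIrred Y)
    (hInn : ∀ i, 0 ≤ (Y *ᵥ Vs) i) (hIne : Y *ᵥ Vs ≠ 0) :
    closure (Dset Y Vs) ⊆ {x | (∀ i, 0 < x i) ∧ IsMmat (-(Jmat Y Vs x))} := by
  classical
  have hJc : Continuous fun x : Fin n → ℝ => Jmat Y Vs x := Jmat_cont Y Vs
  have hentrycont : ∀ i j, Continuous fun x : Fin n → ℝ => (-(Jmat Y Vs x)) i j := by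
    intro i j
    exact ((continuous_apply j).comp ((continuous_apply i).comp hJc)).neg
  set C1 : Set (Fin n → ℝ) := {x | ∀ i, 0 ≤ x i} with hC1_def
  set C2 : Set (Fin n → ℝ) := {x | ∀ i, 0 ≤ (-(Jmat Y Vs x)) i i} with hC2_def
  set C3 : Set (Fin n → ℝ) :=
    {x | ∃ u ∈ stdSimplex ℝ (Fin n), ∀ i, 0 ≤ ((-(Jmat Y Vs x)) *ᵥ u) i} with hC3_def
  have hC1closed : IsClosed C1 := by
    have : C1 = ⋂ i, {x : Fin n → ℝ | 0 ≤ x i} := by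
      ext x; simp [hC1_def, Set.mem_iInter]
    rw [this]
    exact isClosed_iInter fun i => isClosed_le continuous_const (continuous_apply i)
  have hC2closed : IsClosed C2 := by
    have : C2 = ⋂ i, {x : Fin n → ℝ | 0 ≤ (-(Jmat Y Vs x)) i i} := by
      ext x; simp [hC2_def, Set.mem_iInter]
    rw [this]
    exact isClosed_iInter fun i => isClosed_le continuous_const (hentrycont i i)
  have hKc : IsCompact (stdSimplex ℝ (Fin n)) := isCompact_stdSimplex _ _
  haveI : CompactSpace (stdSimplex ℝ (Fin n)) := isCompact_iff_compactSpace.mp hKc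
  have hC3closed : IsClosed C3 := by
    set E : Set ((stdSimplex ℝ (Fin n)) × (Fin n → ℝ)) :=
      {p | ∀ i, 0 ≤ ((-(Jmat Y Vs p.2)) *ᵥ (p.1 : Fin n → ℝ)) i} with hE_def
    have hEclosed : IsClosed E := by
      have : E = ⋂ i, {p : (stdSimplex ℝ (Fin n)) × (Fin n → ℝ) |
          0 ≤ ((-(Jmat Y Vs p.2)) *ᵥ (p.1 : Fin n → ℝ)) i} := by
        ext p; simp [hE_def, Set.mem_iInter]
      rw [this]
      refine isClosed_iInter fun i => isClosed_le continuous_const ?_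
      have : (fun p : (stdSimplex ℝ (Fin n)) × (Fin n → ℝ) =>
          ((-(Jmat Y Vs p.2)) *ᵥ (p.1 : Fin n → ℝ)) i)
          = fun p => ∑ j, (-(Jmat Y Vs p.2)) i j * (p.1 : Fin n → ℝ) j := by
        funext p
        simp [Matrix.mulVec, dotProduct]
      rw [this]
      refine continuous_finset_sum _ fun j _ => ?_
      refine Continuous.mul ?_ ?_
      · exact (hentrycont i j).comp continuous_snd
      · exact (continuous_apply j).comp (continuous_subtype_val.comp continuous_fst)
    have hC3eq : C3 = Prod.snd '' E := by
      ext x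
      constructor
      · rintro ⟨u, hu, hx⟩
        exact ⟨(⟨u, hu⟩, x), hx, rfl⟩
      · rintro ⟨⟨u, x'⟩, hp, rfl⟩
        exact ⟨(u : Fin n → ℝ), u.2, hp⟩
    rw [hC3eq]
    exact isClosedMap_snd_of_compactSpace E hEclosed
  -- D is contained in each
  have hD1 : Dset Y Vs ⊆ C1 := fun x hx i => (hx.1 i).le
  have hD2 : Dset Y Vs ⊆ C2 := fun x hx i => (Dset_diag_pos hZ hx i).le
  have hD3 : Dset Y Vs ⊆ C3 := fun x hx => Dset_witness hn hx
  have hsub : closure (Dset Y Vs) ⊆ C1 ∩ C2 ∩ C3 :=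
    closure_minimal (fun x hx => ⟨⟨hD1 hx, hD2 hx⟩, hD3 hx⟩)
      ((hC1closed.inter hC2closed).inter hC3closed)
  -- now the barrier argument
  intro x hx
  obtain ⟨⟨h1, h2⟩, h3⟩ := hsub hx
  have hxpos : ∀ i, 0 < x i := by
    by_contra hcon
    push_neg at hcon
    obtain ⟨i0, hi0⟩ := hcon
    have hi0z : x i0 = 0 := le_antisymm hi0 (h1 i0)
    set α : Finset (Fin n) := Finset.univ.filter (fun i => x i = 0) with hα_def
    have hαne : α.Nonempty := ⟨i0, Finset.mem_filter.mpr ⟨Finset.mem_univ _, hi0z⟩⟩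
    -- for each i ∈ α : (Y *ᵥ Vs) i = 0 and Y i j * x j = 0 for all j
    have hkey : ∀ i ∈ α, (Y *ᵥ Vs) i = 0 ∧ ∀ j, Y i j * x j = 0 := by
      intro i hiα
      have hiz : x i = 0 := (Finset.mem_filter.mp hiα).2
      have hdiag := h2 i
      rw [Jneg_apply_diag, hiz, Matrix.mulVec_sub] at hdiag
      -- hdiag : 0 ≤ 0 * Y i i - ((Y *ᵥ Vs) i - (Y *ᵥ x) i)
      have hterm : ∀ j ∈ Finset.univ, Y i j * x j ≤ (0:ℝ) := by
        intro j _
        by_cases hj : x j = 0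
        · simp [hj]
        · have hji : j ≠ i := fun h => hj (h ▸ hiz)
          exact mul_nonpos_of_nonpos_of_nonneg (hZ i j hji.symm) (h1 j)
      have hYx : (Y *ᵥ x) i = ∑ j, Y i j * x j := by
        simp [Matrix.mulVec, dotProduct]
      have hYxnp : (Y *ᵥ x) i ≤ 0 := by
        rw [hYx]; exact Finset.sum_nonpos hterm
      have hYVs0 : (Y *ᵥ Vs) i = 0 := le_antisymm (by simp at hdiag; linarith) (hInn i)
      have hYx0 : ∑ j, Y i j * x j = 0 := by
        rw [← hYx]
        have : 0 ≤ (Y *ᵥ x) i := by simp at hdiag; linarith [hInn i]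
        linarith
      exact ⟨hYVs0, fun j =>
        (Finset.sum_eq_zero_iff_of_nonpos hterm).mp hYx0 j (Finset.mem_univ j)⟩
    by_cases hαu : α = Finset.univ
    · apply hIne
      funext i
      have : i ∈ α := hαu ▸ Finset.mem_univ i
      simpa using (hkey i this).1
    · obtain ⟨i, hiα, j, hjαc, hYij⟩ := hirr α hαne hαu
      have hjα : j ∉ α := Finset.mem_compl.mp hjαc
      have hxj : x j ≠ 0 := fun h => hjα (Finset.mem_filter.mpr ⟨Finset.mem_univ j, h⟩)
      have := (hkey i hiα).2 j
      rcases mul_eq_zero.mp this with h | h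
      · exact hYij h
      · exact hxj h
  refine ⟨hxpos, Jneg_Zmat hZ (fun i => (hxpos i).le), ?_⟩
  obtain ⟨u, hu, hAu⟩ := h3
  have hune : u ≠ 0 := by
    intro h
    have := hu.2
    rw [h] at this
    simp at this
  have hupos : ∀ i, 0 < u i :=
    pos_of_support (Jneg_Zmat hZ (fun i => (hxpos i).le)) (Jneg_Irred hirr hxpos)
      hu.1 hune hAu
  intro μ hμ
  exact (eig_nonneg_of_weights (Jneg_Zmat hZ (fun i => (hxpos i).le)) hupos hAu hμ).1
end Problem4
section Problem5
open Filter Topology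
variable {n : ℕ}

/-- positive weight vector witness for an M-matrix `−J(x)` -/
lemma Mmat_witness {Y : Matrix (Fin n) (Fin n) ℝ} {Vs : Fin n → ℝ}
    (hn : 1 ≤ n) (hZ : IsZmat Y) (hirr : IsIrred Y) {x : Fin n → ℝ}
    (hx : ∀ i, 0 < x i)
    (heig : ∀ μ ∈ spectrum ℂ ((-(Jmat Y Vs x)).map Complex.ofReal), 0 ≤ μ.re) :
    ∃ u : Fin n → ℝ, (∀ i, 0 < u i) ∧ (∀ i, 0 ≤ ((-(Jmat Y Vs x)) *ᵥ u) i) := by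
  classical
  have i0 : Fin n := ⟨0, hn⟩
  set A : Matrix (Fin n) (Fin n) ℝ := -(Jmat Y Vs x) with hA_def
  have hZA : IsZmat A := Jneg_Zmat hZ (fun i => (hx i).le)
  have hirrA : IsIrred A := Jneg_Irred hirr hx
  have hZAt : ∀ t : ℝ, IsZmat (A + t • (1 : Matrix (Fin n) (Fin n) ℝ)) := by
    intro t i j hij
    simp only [Matrix.add_apply, Matrix.smul_apply, Matrix.one_apply, hij, if_false]
    simpa using hZA i j hij
  have hirrAt : ∀ t : ℝ, IsIrred (A + t • (1 : Matrix (Fin n) (Fin n) ℝ)) := by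
    intro t α hne hnu
    obtain ⟨i, hi, j, hj, hij⟩ := hirrA α hne hnu
    have hij' : i ≠ j := fun h => (Finset.mem_compl.mp hj) (h ▸ hi)
    refine ⟨i, hi, j, hj, ?_⟩
    simpa [Matrix.add_apply, Matrix.smul_apply, Matrix.one_apply, hij'] using hij
  -- for each ε = 1/(m+1) get an approximate witness in the simplex
  have happrox : ∀ m : ℕ, ∃ u ∈ stdSimplex ℝ (Fin n),
      ∀ i, -(1 / (m + 1) : ℝ) ≤ (A *ᵥ u) i := by
    intro m
    set ε : ℝ := 1 / (m + 1) with hε_def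
    have hε : 0 < ε := by positivity
    have heigt : ∀ μ ∈ spectrum ℂ
        ((A + ε • (1 : Matrix (Fin n) (Fin n) ℝ)).map Complex.ofReal), 0 < μ.re := by
      intro μ hμ
      rw [map_shift, spec_shift] at hμ
      have := heig _ hμ
      simp only [Complex.sub_re, Complex.ofReal_re] at this
      linarith
    obtain ⟨hdet, hinv⟩ := inv_pos_of_eig_pos (hZAt ε) (hirrAt ε) heigt
    set M : Matrix (Fin n) (Fin n) ℝ := A + ε • (1 : Matrix (Fin n) (Fin n) ℝ) with hM_def
    set w : Fin n → ℝ := M⁻¹ *ᵥ (fun _ => (1:ℝ)) with hw_def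
    have hw : ∀ i, 0 < w i := by
      intro i
      rw [hw_def]
      simp only [Matrix.mulVec, dotProduct, mul_one]
      exact Finset.sum_pos (fun j _ => hinv i j) ⟨i0, Finset.mem_univ i0⟩
    have hMw : M *ᵥ w = (fun _ => (1:ℝ)) := by
      rw [hw_def, Matrix.mulVec_mulVec, Matrix.mul_nonsing_inv _ hdet, Matrix.one_mulVec]
    set s : ℝ := ∑ i, w i with hs_def
    have hs : 0 < s := Finset.sum_pos (fun i _ => hw i) ⟨i0, Finset.mem_univ i0⟩
    set u : Fin n → ℝ := s⁻¹ • w with hu_def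
    have husimp : u ∈ stdSimplex ℝ (Fin n) := by
      refine ⟨fun i => mul_nonneg (inv_nonneg.mpr hs.le) (hw i).le, ?_⟩
      simp only [hu_def, Pi.smul_apply, smul_eq_mul]
      rw [← Finset.mul_sum, ← hs_def]
      field_simp
    have hub : ∀ i, u i ≤ 1 := by
      intro i
      have h1 : u i ≤ ∑ j, u j :=
        Finset.single_le_sum (fun j _ => husimp.1 j) (Finset.mem_univ i)
      rw [husimp.2] at h1
      exact h1
    refine ⟨u, husimp, fun i => ?_⟩
    have hMu : M *ᵥ u = fun _ => s⁻¹ := by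
      rw [hu_def, Matrix.mulVec_smul, hMw]
      funext j
      simp
    have hAu : (A *ᵥ u) i = s⁻¹ - ε * u i := by
      have h2 : M *ᵥ u = A *ᵥ u + ε • u := by
        rw [hM_def, Matrix.add_mulVec, Matrix.smul_mulVec, Matrix.one_mulVec]
      have := congrFun (h2.symm.trans hMu) i
      simp only [Pi.add_apply, Pi.smul_apply, smul_eq_mul] at this
      linarith
    rw [hAu]
    have : ε * u i ≤ ε * 1 := mul_le_mul_of_nonneg_left (hub i) hε.le
    have hsinv : 0 ≤ s⁻¹ := inv_nonneg.mpr hs.le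
    simp only [hε_def] at *
    linarith
  -- compactness : pass to the limit
  set K : ℕ → Set (Fin n → ℝ) := fun m =>
    stdSimplex ℝ (Fin n) ∩ ⋂ i, {u | -(1 / (m + 1) : ℝ) ≤ (A *ᵥ u) i} with hK_def
  have hKclosed : ∀ m, IsClosed (K m) := by
    intro m
    refine IsClosed.inter (isCompact_stdSimplex _ _).isClosed (isClosed_iInter fun i => ?_)
    have hc : Continuous fun u : Fin n → ℝ => (A *ᵥ u) i := by
      simp only [Matrix.mulVec, dotProduct]
      exact continuous_finset_sum _ fun j _ => continuous_const.mul (continuous_apply j)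
    exact isClosed_le continuous_const hc
  have hKcompact : ∀ m, IsCompact (K m) :=
    fun m => (isCompact_stdSimplex _ _).of_isClosed_subset (hKclosed m) Set.inter_subset_left
  have hKnonempty : ∀ m, (K m).Nonempty := by
    intro m
    obtain ⟨u, hu, hAu⟩ := happrox m
    exact ⟨u, hu, Set.mem_iInter.mpr fun i => hAu i⟩
  have hKmono : ∀ m, K (m + 1) ⊆ K m := by
    intro m u hu
    refine ⟨hu.1, Set.mem_iInter.mpr fun i => ?_⟩
    have h1 := Set.mem_iInter.mp hu.2 i
    have h3 : (1 / ((m:ℝ) + 1 + 1) : ℝ) ≤ 1 / ((m:ℝ) + 1) :=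
      one_div_le_one_div_of_le (by positivity) (by linarith)
    simp only [Set.mem_setOf_eq] at h1 ⊢
    push_cast at h1 ⊢
    linarith
  obtain ⟨u, hu⟩ := IsCompact.nonempty_iInter_of_sequence_nonempty_isCompact_isClosed
    K hKmono hKnonempty (hKcompact 0) hKclosed
  have huK : ∀ m, u ∈ K m := fun m => Set.mem_iInter.mp hu m
  have husimp : u ∈ stdSimplex ℝ (Fin n) := (huK 0).1
  have hAu : ∀ i, 0 ≤ (A *ᵥ u) i := by
    intro i
    by_contra hcon
    push_neg at hcon
    obtain ⟨m, hm⟩ := exists_nat_one_div_lt (show (0:ℝ) < -((A *ᵥ u) i) by linarith)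
    have := Set.mem_iInter.mp (huK m).2 i
    simp only [Set.mem_setOf_eq] at this
    push_cast at hm this
    linarith
  have hune : u ≠ 0 := by
    intro h
    have := husimp.2
    rw [h] at this
    simp at this
  exact ⟨u, pos_of_support hZA hirrA husimp.1 hune hAu, hAu⟩
end Problem5
section Problem6
open Filter Topology
variable {n : ℕ}

lemma diag_mulVec_apply (v u : Fin n → ℝ) (i : Fin n) :
    (Matrix.diagonal v *ᵥ u) i = v i * u i := by
  simp [Matrix.mulVec, diagonal_dotProduct]

lemma subset_closure_Dset {Y : Matrix (Fin n) (Fin n) ℝ} {Vs : Fin n → ℝ}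
    (hn : 1 ≤ n) (hZ : IsZmat Y) (hirr : IsIrred Y)
    (hInn : ∀ i, 0 ≤ (Y *ᵥ Vs) i) (hIne : Y *ᵥ Vs ≠ 0) :
    {x | (∀ i, 0 < x i) ∧ IsMmat (-(Jmat Y Vs x))} ⊆ closure (Dset Y Vs) := by
  rintro x ⟨hx, hZm, heig⟩
  obtain ⟨u, hupos, hAu⟩ := Mmat_witness hn hZ hirr hx heig
  obtain ⟨i1, hi1⟩ := Function.ne_iff.mp hIne
  have hI1 : 0 < (Y *ᵥ Vs) i1 := lt_of_le_of_ne (hInn i1) (by simpa using Ne.symm hi1)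
  have hmem : ∀ m : ℕ, ((1 + 1/((m:ℝ)+1)) • x) ∈ Dset Y Vs := by
    intro m
    set t : ℝ := 1 + 1/((m:ℝ)+1) with ht_def
    have ht1 : 1 < t := by
      rw [ht_def]
      have : 0 < 1/((m:ℝ)+1) := by positivity
      linarith
    have ht0 : 0 < t := by linarith
    have hxt : ∀ i, 0 < (t • x) i := by
      intro i
      simp only [Pi.smul_apply, smul_eq_mul]
      exact mul_pos ht0 (hx i)
    rw [Dset_char hn hZ hirr]
    refine ⟨hxt, ?_⟩
    have hcoord : ∀ i, ((-(Jmat Y Vs (t • x))) *ᵥ u) i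
        = t * ((-(Jmat Y Vs x)) *ᵥ u) i + (t - 1) * ((Y *ᵥ Vs) i * u i) := by
      intro i
      rw [Jneg_scale, Matrix.add_mulVec, Matrix.smul_mulVec, Matrix.smul_mulVec]
      simp only [Pi.add_apply, Pi.smul_apply, smul_eq_mul]
      rw [diag_mulVec_apply]
    have hAtu : ∀ i, 0 ≤ ((-(Jmat Y Vs (t • x))) *ᵥ u) i := by
      intro i
      rw [hcoord i]
      have h1 : 0 ≤ t * ((-(Jmat Y Vs x)) *ᵥ u) i := mul_nonneg ht0.le (hAu i)
      have h2 : 0 ≤ (t - 1) * ((Y *ᵥ Vs) i * u i) :=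
        mul_nonneg (by linarith) (mul_nonneg (hInn i) (hupos i).le)
      linarith
    have hAtne : (-(Jmat Y Vs (t • x))) *ᵥ u ≠ 0 := by
      intro h
      have := congrFun h i1
      rw [hcoord i1] at this
      have h1 : 0 ≤ t * ((-(Jmat Y Vs x)) *ᵥ u) i1 := mul_nonneg ht0.le (hAu i1)
      have h2 : 0 < (t - 1) * ((Y *ᵥ Vs) i1 * u i1) :=
        mul_pos (by linarith) (mul_pos hI1 (hupos i1))
      simp only [Pi.zero_apply] at this
      linarith
    intro μ hμ
    exact eig_pos_of_weights (Jneg_Zmat hZ (fun i => (hxt i).le)) (Jneg_Irred hirr hxt)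
      hupos hAtu hAtne hμ
  have htt : Tendsto (fun m : ℕ => (1 + 1/((m:ℝ)+1))) atTop (nhds 1) := by
    have := tendsto_one_div_add_atTop_nhds_zero_nat.const_add (1:ℝ)
    simpa using this
  have htx : Tendsto (fun m : ℕ => (1 + 1/((m:ℝ)+1)) • x) atTop (nhds x) := by
    have := htt.smul_const x
    simpa using this
  exact mem_closure_of_tendsto htx (Filter.Eventually.of_forall hmem)
end Problem6

theorem stmt_9 (n : ℕ) (hn : 1 ≤ n)
    (Y : Matrix (Fin n) (Fin n) ℝ)
    (hPD : Y.PosDef)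
    (hZ : IsZmat Y)
    (hirr : IsIrred Y)
    (Vs : Fin n → ℝ) (hVs : ∀ i, 0 < Vs i)
    (hInn : ∀ i, 0 ≤ (Y *ᵥ Vs) i) (hIne : Y *ᵥ Vs ≠ 0) :
    closure (Dset Y Vs) = {x | (∀ i, 0 < x i) ∧ IsMmat (-(Jmat Y Vs x))} ∧
    frontier (Dset Y Vs) =
      {x | (∀ i, 0 < x i) ∧ IsMmat (-(Jmat Y Vs x)) ∧ (-(Jmat Y Vs x)).det = 0} := by
  have hclos : closure (Dset Y Vs) = {x | (∀ i, 0 < x i) ∧ IsMmat (-(Jmat Y Vs x))} :=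
    Set.Subset.antisymm (closure_Dset_subset hn hZ hirr hInn hIne)
      (subset_closure_Dset hn hZ hirr hInn hIne)
  refine ⟨hclos, ?_⟩
  rw [(Dset_open Y Vs).frontier_eq, hclos]
  ext x
  constructor
  · rintro ⟨⟨hx, hM⟩, hxD⟩
    refine ⟨hx, hM, ?_⟩
    by_contra hdet
    obtain ⟨u, hupos, hAu⟩ := Mmat_witness hn hZ hirr hx hM.2
    apply hxD
    rw [Dset_char hn hZ hirr]
    refine ⟨hx, fun μ hμ => ?_⟩
    obtain ⟨h1, h2⟩ := eig_nonneg_of_weights (Jneg_Zmat hZ fun i => (hx i).le) hupos hAu hμ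
    rcases h1.lt_or_eq with h | h
    · exact h
    · exfalso
      have hμ0 : μ = 0 := h2 h.symm
      rw [hμ0] at hμ
      exact hdet (det_eq_zero_of_zero_mem_spec hμ)
  · rintro ⟨hx, hM, hdet0⟩
    refine ⟨⟨hx, hM⟩, ?_⟩
    intro hxD
    obtain ⟨-, hdetJ, -⟩ := hxD
    have hu : IsUnit (-(Jmat Y Vs x)).det := (det_neg_isUnit_iff _).mpr hdetJ
    rw [hdet0] at hu
    simpa using hu
end
end

section
/- For every λ ∈ Λ and every x ∈ ℝⁿ: λᵀ P_c(x) = ‖φ(λ)‖_{h(λ)}² − ‖φ(λ) − x‖_{h(λ)}². Consequently λᵀ P_c(x) ≤ ‖φ(λ)‖_{h(λ)}² = λᵀ P_c(φ(λ)), with equality if and only if x = φ(λ); and if P_c(x) = P_c(φ(λ)) then x = φ(λ). -/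
open Matrix Set

noncomputable section

theorem stmt_10 (n : ℕ) (hn : 1 ≤ n)
    (Y : Matrix (Fin n) (Fin n) ℝ)
    (hPD : Y.PosDef)
    (hZ : IsZmat Y)
    (hirr : IsIrred Y)
    (Vs : Fin n → ℝ) (hVs : ∀ i, 0 < Vs i)
    (hInn : ∀ i, 0 ≤ (Y *ᵥ Vs) i) (hIne : Y *ᵥ Vs ≠ 0)
    (l : Fin n → ℝ) (hl : (hmat Y l).PosDef) (x : Fin n → ℝ) :
    l ⬝ᵥ Pc Y Vs x = qnorm Y l (phiv Y Vs l) - qnorm Y l (phiv Y Vs l - x) ∧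
    l ⬝ᵥ Pc Y Vs x ≤ qnorm Y l (phiv Y Vs l) ∧
    qnorm Y l (phiv Y Vs l) = l ⬝ᵥ Pc Y Vs (phiv Y Vs l) ∧
    (l ⬝ᵥ Pc Y Vs x = qnorm Y l (phiv Y Vs l) ↔ x = phiv Y Vs l) ∧
    (Pc Y Vs x = Pc Y Vs (phiv Y Vs l) → x = phiv Y Vs l) := by
  set D := Matrix.diagonal l with hD
  set h := hmat Y l with hh
  set φ := phiv Y Vs l with hφdef
  -- symmetry of Y and h
  have hYs : Yᵀ = Y := by
    have := hPD.isHermitian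
    simpa [Matrix.IsHermitian] using this
  have hhs : hᵀ = h := by
    rw [hh]
    simp [hmat, Matrix.transpose_add, Matrix.transpose_mul, hYs]
    ring_nf
    rw [add_comm]
  have hsym : ∀ u v : Fin n → ℝ, u ⬝ᵥ (h *ᵥ v) = v ⬝ᵥ (h *ᵥ u) := by
    intro u v
    rw [Matrix.dotProduct_mulVec, ← Matrix.mulVec_transpose, hhs, dotProduct_comm]
  -- h *ᵥ φ = ½ • (D *ᵥ (Y *ᵥ Vs))
  have hinv : h * h⁻¹ = 1 := Matrix.mul_nonsing_inv h (isUnit_iff_ne_zero.mpr hl.det_pos.ne')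
  have hφ : h *ᵥ φ = (1/2 : ℝ) • ((D * Y) *ᵥ Vs) := by
    rw [hφdef]
    show h *ᵥ ((1/2 : ℝ) • (h⁻¹ *ᵥ (D *ᵥ (Y *ᵥ Vs)))) = _
    rw [Matrix.mulVec_smul, Matrix.mulVec_mulVec, hinv, Matrix.one_mulVec]
    simp [Matrix.mulVec_mulVec]
  -- quadratic form of D*Y equals that of h
  have quad : ∀ u : Fin n → ℝ, u ⬝ᵥ ((D * Y) *ᵥ u) = u ⬝ᵥ (h *ᵥ u) := by
    intro u
    have hYD : Y * D = (D * Y)ᵀ := by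
      rw [Matrix.transpose_mul, hYs, hD, Matrix.diagonal_transpose]
    have htr : u ⬝ᵥ ((D * Y)ᵀ *ᵥ u) = u ⬝ᵥ ((D * Y) *ᵥ u) := by
      rw [Matrix.mulVec_transpose, Matrix.dotProduct_mulVec, dotProduct_comm]
    rw [hh]
    show _ = u ⬝ᵥ (((1/2 : ℝ) • (D * Y + Y * D)) *ᵥ u)
    rw [Matrix.smul_mulVec, Matrix.add_mulVec, dotProduct_smul,
      dotProduct_add, hYD, htr, smul_eq_mul]
    ring
  -- main identity in intermediate form
  have main : ∀ z : Fin n → ℝ,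
      l ⬝ᵥ Pc Y Vs z = 2 * (z ⬝ᵥ (h *ᵥ φ)) - z ⬝ᵥ (h *ᵥ z) := by
    intro z
    have step1 : l ⬝ᵥ Pc Y Vs z = z ⬝ᵥ (D *ᵥ (Y *ᵥ (Vs - z))) := by
      simp only [Pc, dotProduct, Matrix.mulVec_diagonal, hD]
      apply Finset.sum_congr rfl
      intro i _
      ring
    rw [step1, Matrix.mulVec_sub, Matrix.mulVec_sub, dotProduct_sub]
    simp only [Matrix.mulVec_mulVec]
    rw [quad z, hφ, dotProduct_smul, smul_eq_mul]
    ring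
  have key : l ⬝ᵥ Pc Y Vs x = qnorm Y l φ - qnorm Y l (φ - x) := by
    rw [main x]
    show _ = φ ⬝ᵥ (h *ᵥ φ) - (φ - x) ⬝ᵥ (h *ᵥ (φ - x))
    rw [Matrix.mulVec_sub, sub_dotProduct, dotProduct_sub,
      dotProduct_sub, hsym x φ]
    ring
  have qnonneg : ∀ v : Fin n → ℝ, 0 ≤ v ⬝ᵥ (h *ᵥ v) := by
    intro v
    by_cases hv : v = 0
    · simp [hv]
    · have := hl.dotProduct_mulVec_pos hv
      have h2 : star v ⬝ᵥ (h *ᵥ v) = v ⬝ᵥ (h *ᵥ v) := by simp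
      linarith [this.le, le_of_eq h2]
  have qzero : ∀ v : Fin n → ℝ, v ⬝ᵥ (h *ᵥ v) = 0 → v = 0 := by
    intro v hv0
    by_contra hv
    have := hl.dotProduct_mulVec_pos hv
    have h2 : star v ⬝ᵥ (h *ᵥ v) = v ⬝ᵥ (h *ᵥ v) := by simp
    rw [h2, hv0] at this
    exact lt_irrefl 0 this
  have qn : qnorm Y l (φ - x) = (φ - x) ⬝ᵥ (h *ᵥ (φ - x)) := rfl
  have at_phi : qnorm Y l φ = l ⬝ᵥ Pc Y Vs φ := by
    rw [main φ]
    show φ ⬝ᵥ (h *ᵥ φ) = _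
    ring
  refine ⟨key, ?_, at_phi, ?_, ?_⟩
  · rw [key]
    have := qnonneg (φ - x)
    rw [← qn] at this
    linarith
  · constructor
    · intro heq
      rw [key] at heq
      have h0 : qnorm Y l (φ - x) = 0 := by linarith
      rw [qn] at h0
      have := qzero _ h0
      have : φ - x = 0 := this
      have := sub_eq_zero.mp this
      exact this.symm
    · intro hx
      rw [hx]
      exact at_phi.symm
  · intro hPc
    have : l ⬝ᵥ Pc Y Vs x = l ⬝ᵥ Pc Y Vs φ := by rw [hPc]
    rw [← at_phi] at this
    rw [key] at this
    have h0 : qnorm Y l (φ - x) = 0 := by linarith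
    rw [qn] at h0
    have := sub_eq_zero.mp (qzero _ h0)
    exact this.symm
end
end

section
/- Let λ ∈ ℝⁿ with ‖λ‖₁ = 1 and let s ∈ ℝ. The closed half-space H(λ, s) := {y ∈ ℝⁿ : λᵀ y ≤ s} supports F if and only if λ ∈ Λ₁ and s = ‖φ(λ)‖_{h(λ)}²; in that case, cl F ∩ {y : λᵀ y = s} = {P_c(φ(λ))}, i.e. P_c(φ(λ)) is the unique point of support. Moreover, H(λ, s) supports F if and only if it supports the image P_c(ℝⁿ) = {P_c(x) : x ∈ ℝⁿ}, and in that case cl(P_c(ℝⁿ)) ∩ {y : λᵀ y = s} = {P_c(φ(λ))}. -/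
open Matrix Set

noncomputable section

/-- The closed half-space `H(ν, s)` supports `S`. -/
def Supports {k : ℕ} (ν : Fin k → ℝ) (s : ℝ) (S : Set (Fin k → ℝ)) : Prop :=
  S ⊆ {y | ν ⬝ᵥ y ≤ s} ∧ (closure S ∩ {y | ν ⬝ᵥ y = s}).Nonempty

open Matrix Set
variable {n : ℕ}

lemma sym_dot {Y : Matrix (Fin n) (Fin n) ℝ} (hY : Yᵀ = Y) (u v : Fin n → ℝ) :
    u ⬝ᵥ (Y *ᵥ v) = v ⬝ᵥ (Y *ᵥ u) := by
  conv_lhs => rw [dotProduct_mulVec, ← hY, vecMul_transpose]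
  exact dotProduct_comm _ _

lemma hmat_transpose {Y : Matrix (Fin n) (Fin n) ℝ} (hY : Yᵀ = Y) (l : Fin n → ℝ) :
    (hmat Y l)ᵀ = hmat Y l := by
  simp [hmat, transpose_add, transpose_mul, hY, add_comm]

lemma hmat_apply (Y : Matrix (Fin n) (Fin n) ℝ) (l : Fin n → ℝ) (i j : Fin n) :
    hmat Y l i j = (1/2) * (l i * Y i j + Y i j * l j) := by
  simp [hmat, diagonal_mul, mul_diagonal]

lemma dot_diag_comm (l x u : Fin n → ℝ) :
    l ⬝ᵥ (Matrix.diagonal x *ᵥ u) = x ⬝ᵥ (Matrix.diagonal l *ᵥ u) := by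
  simp only [dotProduct, mulVec_diagonal]
  exact Finset.sum_congr rfl fun i _ => by ring

lemma qnorm_eq {Y : Matrix (Fin n) (Fin n) ℝ} (hY : Yᵀ = Y) (l x : Fin n → ℝ) :
    qnorm Y l x = x ⬝ᵥ (Matrix.diagonal l *ᵥ (Y *ᵥ x)) := by
  have h2 : x ⬝ᵥ (Y *ᵥ (Matrix.diagonal l *ᵥ x)) = x ⬝ᵥ (Matrix.diagonal l *ᵥ (Y *ᵥ x)) := by
    rw [sym_dot hY]
    simp only [dotProduct, mulVec_diagonal]
    exact Finset.sum_congr rfl fun i _ => by ring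
  simp only [qnorm, hmat, smul_mulVec, add_mulVec, ← mulVec_mulVec, dotProduct_smul,
    dotProduct_add, h2]
  ring_nf

lemma dot_pc {Y : Matrix (Fin n) (Fin n) ℝ} (hY : Yᵀ = Y) (Vs l x : Fin n → ℝ) :
    l ⬝ᵥ Pc Y Vs x = x ⬝ᵥ (Matrix.diagonal l *ᵥ (Y *ᵥ Vs)) - qnorm Y l x := by
  rw [Pc, dot_diag_comm, qnorm_eq hY, mulVec_sub, mulVec_sub, dotProduct_sub]

lemma hmat_mulVec_phiv {Y : Matrix (Fin n) (Fin n) ℝ} {l : Fin n → ℝ}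
    (hPDh : (hmat Y l).PosDef) (Vs : Fin n → ℝ) :
    hmat Y l *ᵥ phiv Y Vs l = (1/2 : ℝ) • (Matrix.diagonal l *ᵥ (Y *ᵥ Vs)) := by
  have hdet : IsUnit (hmat Y l).det := isUnit_iff_ne_zero.mpr hPDh.det_pos.ne'
  rw [phiv, mulVec_smul, mulVec_mulVec, Matrix.mul_nonsing_inv _ hdet, one_mulVec]

lemma complete_square {Y : Matrix (Fin n) (Fin n) ℝ} {l : Fin n → ℝ} (hY : Yᵀ = Y)
    (hPDh : (hmat Y l).PosDef) (Vs x : Fin n → ℝ) :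
    x ⬝ᵥ (Matrix.diagonal l *ᵥ (Y *ᵥ Vs)) - qnorm Y l x
      = qnorm Y l (phiv Y Vs l)
        - (x - phiv Y Vs l) ⬝ᵥ (hmat Y l *ᵥ (x - phiv Y Vs l)) := by
  set φ := phiv Y Vs l
  have hsym : ∀ u v : Fin n → ℝ, u ⬝ᵥ (hmat Y l *ᵥ v) = v ⬝ᵥ (hmat Y l *ᵥ u) :=
    sym_dot (hmat_transpose hY l)
  have hx : x ⬝ᵥ (hmat Y l *ᵥ φ) = (1/2) * (x ⬝ᵥ (Matrix.diagonal l *ᵥ (Y *ᵥ Vs))) := by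
    rw [hmat_mulVec_phiv hPDh, dotProduct_smul]; simp
  have hφx : φ ⬝ᵥ (hmat Y l *ᵥ x) = (1/2) * (x ⬝ᵥ (Matrix.diagonal l *ᵥ (Y *ᵥ Vs))) := by
    rw [← hsym, hx]
  simp only [qnorm, mulVec_sub, dotProduct_sub, sub_dotProduct, hx, hφx]
  ring

lemma abs_quad {h : Matrix (Fin n) (Fin n) ℝ} (hz : ∀ i j, i ≠ j → h i j ≤ 0) (v : Fin n → ℝ) :
    (fun i => |v i|) ⬝ᵥ (h *ᵥ fun i => |v i|) ≤ v ⬝ᵥ (h *ᵥ v) := by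
  simp only [dotProduct, mulVec, Finset.mul_sum]
  refine Finset.sum_le_sum fun i _ => Finset.sum_le_sum fun j _ => ?_
  rcases eq_or_ne i j with rfl | hij
  · refine le_of_eq ?_
    calc |v i| * (h i i * |v i|) = h i i * (|v i| * |v i|) := by ring
    _ = h i i * (v i * v i) := by rw [abs_mul_abs_self]
    _ = v i * (h i i * v i) := by ring
  · have h1 : h i j ≤ 0 := hz i j hij
    have h2 : v i * v j ≤ |v i| * |v j| := by rw [← abs_mul]; exact le_abs_self _
    nlinarith

lemma kernel_of_quad_zero {h : Matrix (Fin n) (Fin n) ℝ} (hsym : hᵀ = h)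
    (hpsd : ∀ v : Fin n → ℝ, 0 ≤ v ⬝ᵥ (h *ᵥ v)) {w : Fin n → ℝ}
    (hw : w ⬝ᵥ (h *ᵥ w) = 0) : h *ᵥ w = 0 := by
  have hps : h.PosSemidef := by
    refine PosSemidef.of_dotProduct_mulVec_nonneg ?_ fun x => by simpa using hpsd x
    ext i j
    exact congrFun (congrFun hsym i) j
  have := (hps.dotProduct_mulVec_zero_iff w).mp (by simpa using hw)
  exact this

lemma pd_quad_pos {h : Matrix (Fin n) (Fin n) ℝ} (hp : h.PosDef) {u : Fin n → ℝ} (hu : u ≠ 0) :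
    0 < u ⬝ᵥ (h *ᵥ u) := by
  simpa using hp.dotProduct_mulVec_pos hu

lemma pd_quad_nonneg {h : Matrix (Fin n) (Fin n) ℝ} (hp : h.PosDef) (u : Fin n → ℝ) :
    0 ≤ u ⬝ᵥ (h *ᵥ u) := by
  rcases eq_or_ne u 0 with rfl | hu
  · simp
  · exact (pd_quad_pos hp hu).le

lemma hmat_offdiag_nonpos {Y : Matrix (Fin n) (Fin n) ℝ} {l : Fin n → ℝ}
    (hZ : IsZmat Y) (hl : ∀ i, 0 ≤ l i) :
    ∀ i j, i ≠ j → hmat Y l i j ≤ 0 := by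
  intro i j hij
  rw [hmat_apply]
  have := hZ i j hij
  nlinarith [hl i, hl j]

lemma phiv_nonneg {Y : Matrix (Fin n) (Fin n) ℝ} {l Vs : Fin n → ℝ} (hY : Yᵀ = Y)
    (hZ : IsZmat Y) (hPDh : (hmat Y l).PosDef) (hl : ∀ i, 0 ≤ l i)
    (hInn : ∀ i, 0 ≤ (Y *ᵥ Vs) i) : ∀ i, 0 ≤ phiv Y Vs l i := by
  set φ := phiv Y Vs l with hφdef
  set c := Matrix.diagonal l *ᵥ (Y *ᵥ Vs) with hcdef
  set w : Fin n → ℝ := fun i => |φ i| with hwdef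
  have hcnn : ∀ i, 0 ≤ c i := fun i => by
    rw [hcdef, mulVec_diagonal]; exact mul_nonneg (hl i) (hInn i)
  have hdotc : φ ⬝ᵥ c ≤ w ⬝ᵥ c := by
    refine Finset.sum_le_sum fun i _ => ?_
    exact mul_le_mul_of_nonneg_right (le_abs_self _) (hcnn i)
  have hq : w ⬝ᵥ (hmat Y l *ᵥ w) ≤ φ ⬝ᵥ (hmat Y l *ᵥ φ) :=
    abs_quad (hmat_offdiag_nonpos hZ hl) φ
  have h1 := complete_square hY hPDh Vs w
  have h2 := complete_square hY hPDh Vs φ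
  rw [sub_self] at h2
  simp only [mulVec_zero, dotProduct_zero, sub_zero] at h2
  have hkey : (w - φ) ⬝ᵥ (hmat Y l *ᵥ (w - φ)) ≤ 0 := by
    have : φ ⬝ᵥ c - qnorm Y l φ ≤ w ⬝ᵥ c - qnorm Y l w := by
      simp only [qnorm]; linarith
    rw [h1, h2] at this; linarith
  have hwφ : w - φ = 0 := by
    by_contra hne
    exact absurd hkey (not_le.mpr (pd_quad_pos hPDh hne))
  intro i
  have h6 : w i - φ i = 0 := congrFun hwφ i
  have h7 : |φ i| - φ i = 0 := by simpa [hwdef] using h6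
  linarith [abs_nonneg (φ i)]

lemma lin_blowup (b1 s : ℝ) (hb1 : 0 < b1) : ∃ t : ℝ, 1 ≤ t ∧ s < t * b1 := by
  refine ⟨max 1 ((|s| + 1) / b1), le_max_left _ _, ?_⟩
  have h1 : (|s| + 1) / b1 ≤ max 1 ((|s| + 1) / b1) := le_max_right _ _
  have h2 : |s| + 1 ≤ max 1 ((|s| + 1) / b1) * b1 := (div_le_iff₀ hb1).mp h1
  have := le_abs_self s
  linarith

lemma quad_blowup (b0 b1 b2 s : ℝ) (hb2 : 0 < b2) :
    ∃ t : ℝ, 1 ≤ t ∧ s < b0 + t * b1 + t ^ 2 * b2 := by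
  have key : ∀ t : ℝ, 1 ≤ t → |b0| + |b1| + |s| + 1 ≤ t * b2 →
      s < b0 + t * b1 + t ^ 2 * b2 := by
    intro t ht1 h2
    have ht0 : (0 : ℝ) ≤ t := by linarith
    have h3 : t * (|b0| + |b1| + |s| + 1) ≤ t * (t * b2) :=
      mul_le_mul_of_nonneg_left h2 ht0
    have h4 : -(t * |b1|) ≤ t * b1 := by nlinarith [neg_abs_le b1]
    have h5 : t * (|b0| + |s| + 1) ≥ 1 * (|b0| + |s| + 1) := by
      apply mul_le_mul_of_nonneg_right ht1
      positivity
    have h6 : t ^ 2 * b2 = t * (t * b2) := by ring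
    have h7 : t * (|b0| + |b1| + |s| + 1) = t * (|b0| + |s| + 1) + t * |b1| := by ring
    linarith [le_abs_self s, neg_abs_le b0, abs_nonneg b1, abs_nonneg b0]
  refine ⟨max 1 ((|b0| + |b1| + |s| + 1) / b2), le_max_left _ _, ?_⟩
  refine key _ (le_max_left _ _) ((div_le_iff₀ hb2).mp (le_max_right _ _))

lemma dot_pc_sum (Y : Matrix (Fin n) (Fin n) ℝ) (Vs l x : Fin n → ℝ) :
    l ⬝ᵥ Pc Y Vs x = ∑ j, l j * x j * (Y *ᵥ (Vs - x)) j := by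
  simp only [Pc, dotProduct, mulVec_diagonal, mul_assoc]

lemma dot_pc_single (Y : Matrix (Fin n) (Fin n) ℝ) (Vs l : Fin n → ℝ) (i : Fin n) (t : ℝ) :
    l ⬝ᵥ Pc Y Vs (Vs + t • (Pi.single i 1 : Fin n → ℝ))
      = -(t * ∑ j, l j * Vs j * Y j i) - t ^ 2 * (l i * Y i i) := by
  have hsub : Vs - (Vs + t • (Pi.single i 1 : Fin n → ℝ)) = -(t • (Pi.single i 1 : Fin n → ℝ)) := sub_add_cancel_left _ _
  rw [dot_pc_sum, hsub]
  have hterm : ∀ j, l j * (Vs + t • (Pi.single i 1 : Fin n → ℝ)) j * (Y *ᵥ -(t • (Pi.single i 1 : Fin n → ℝ))) j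
      = -(t * (l j * Vs j * Y j i)) + -(t ^ 2 * (l j * (Pi.single i 1 : Fin n → ℝ) j * Y j i)) := by
    intro j
    rw [mulVec_neg, mulVec_smul, mulVec_single]
    simp only [Pi.add_apply, Pi.neg_apply, Pi.smul_apply, smul_eq_mul, mul_one,
      MulOpposite.op_one, one_smul, Matrix.col_apply]
    ring
  rw [Finset.sum_congr rfl fun j _ => hterm j, Finset.sum_add_distrib]
  have h1 : ∑ j, -(t * (l j * Vs j * Y j i)) = -(t * ∑ j, l j * Vs j * Y j i) := by
    rw [Finset.sum_neg_distrib, ← Finset.mul_sum]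
  have h2 : ∑ j, -(t ^ 2 * (l j * (Pi.single i 1 : Fin n → ℝ) j * Y j i)) = -(t ^ 2 * (l i * Y i i)) := by
    rw [Finset.sum_eq_single i]
    · simp
    · intro j _ hji
      rw [Pi.single_eq_of_ne hji]; ring_nf
    · intro hi; exact absurd (Finset.mem_univ i) hi
  rw [h1, h2]
  ring

lemma expand_quad {Y : Matrix (Fin n) (Fin n) ℝ} (hY : Yᵀ = Y) (l c u v : Fin n → ℝ) (t : ℝ) :
    (u + t • v) ⬝ᵥ c - qnorm Y l (u + t • v)
      = (u ⬝ᵥ c - qnorm Y l u) + t * (v ⬝ᵥ c - 2 * (u ⬝ᵥ (hmat Y l *ᵥ v)))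
        + t ^ 2 * (-(v ⬝ᵥ (hmat Y l *ᵥ v))) := by
  have hsym : v ⬝ᵥ (hmat Y l *ᵥ u) = u ⬝ᵥ (hmat Y l *ᵥ v) :=
    sym_dot (hmat_transpose hY l) v u
  simp only [qnorm, mulVec_add, mulVec_smul, dotProduct_add, add_dotProduct,
    dotProduct_smul, smul_dotProduct, smul_eq_mul, hsym]
  ring

lemma continuous_dotl (l : Fin n → ℝ) : Continuous fun y : Fin n → ℝ => l ⬝ᵥ y := by
  simp only [dotProduct]
  exact continuous_finset_sum _ fun i _ => continuous_const.mul (continuous_apply i)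

lemma continuous_Pc (Y : Matrix (Fin n) (Fin n) ℝ) (Vs : Fin n → ℝ) :
    Continuous (Pc Y Vs) := by
  have : (Pc Y Vs) = fun x i => x i * ∑ j, Y i j * (Vs j - x j) := by
    funext x i
    rw [Pc, mulVec_diagonal]
    simp [mulVec, dotProduct]
  rw [this]
  refine continuous_pi fun i => (continuous_apply i).mul ?_
  exact continuous_finset_sum _ fun j _ =>
    continuous_const.mul (continuous_const.sub (continuous_apply j))

lemma continuous_quadform (M : Matrix (Fin n) (Fin n) ℝ) :
    Continuous fun u : Fin n → ℝ => u ⬝ᵥ (M *ᵥ u) := by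
  have : (fun u : Fin n → ℝ => u ⬝ᵥ (M *ᵥ u))
      = fun u => ∑ i, u i * ∑ j, M i j * u j := by
    funext u; simp [dotProduct, mulVec]
  rw [this]
  exact continuous_finset_sum _ fun i _ => (continuous_apply i).mul
    (continuous_finset_sum _ fun j _ => continuous_const.mul (continuous_apply j))

lemma dot_le_norm {l : Fin n → ℝ} (hl1 : ∑ i, |l i| = 1) (v : Fin n → ℝ) :
    l ⬝ᵥ v ≤ ‖v‖ := by
  calc l ⬝ᵥ v ≤ |l ⬝ᵥ v| := le_abs_self _
  _ ≤ ∑ i, |l i * v i| := Finset.abs_sum_le_sum_abs _ _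
  _ ≤ ∑ i, |l i| * ‖v‖ := by
      refine Finset.sum_le_sum fun i _ => ?_
      rw [abs_mul]
      refine mul_le_mul_of_nonneg_left ?_ (abs_nonneg _)
      simpa [Real.norm_eq_abs] using norm_le_pi_norm v i
  _ = ‖v‖ := by rw [← Finset.sum_mul, hl1, one_mul]

lemma single_pos_shift {Vs : Fin n → ℝ} (hVs : ∀ i, 0 < Vs i) (i : Fin n) {t : ℝ}
    (ht : 0 ≤ t) : ∀ j, 0 < (Vs + t • (Pi.single i 1 : Fin n → ℝ)) j := by
  intro j
  have h0 : (0:ℝ) ≤ (Pi.single i 1 : Fin n → ℝ) j := by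
    rcases eq_or_ne j i with rfl | hne
    · simp
    · simp [Pi.single_eq_of_ne hne]
  have := mul_nonneg ht h0
  simp only [Pi.add_apply, Pi.smul_apply, smul_eq_mul]
  linarith [hVs j]

lemma reverse_core {Y : Matrix (Fin n) (Fin n) ℝ} {Vs l : Fin n → ℝ} {s : ℝ}
    (hPD : Y.PosDef) (hZ : IsZmat Y) (hirr : IsIrred Y) (hVs : ∀ i, 0 < Vs i)
    (hInn : ∀ i, 0 ≤ (Y *ᵥ Vs) i) (hIne : Y *ᵥ Vs ≠ 0) (hl1 : ∑ i, |l i| = 1)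
    (hb : ∀ x : Fin n → ℝ, (∀ i, 0 < x i) → l ⬝ᵥ Pc Y Vs x ≤ s) :
    (∀ i, 0 < l i) ∧ (hmat Y l).PosDef := by
  have hY : Yᵀ = Y := by
    have := hPD.1
    rwa [Matrix.IsHermitian, conjTranspose_eq_transpose_of_trivial] at this
  have hYdiag : ∀ i, 0 < Y i i := by
    intro i
    have hne : (Pi.single i 1 : Fin n → ℝ) ≠ 0 := by
      intro h
      have := congrFun h i
      simp at this
    have := pd_quad_pos hPD hne
    simpa [mulVec_single, single_dotProduct] using this
  -- step A : l is nonnegative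
  have hnn : ∀ i, 0 ≤ l i := by
    intro i
    by_contra hneg
    push_neg at hneg
    have hB : l i * Y i i < 0 := mul_neg_of_neg_of_pos hneg (hYdiag i)
    obtain ⟨t, ht1, hts⟩ := quad_blowup 0 (-(∑ j, l j * Vs j * Y j i)) (-(l i * Y i i)) s
      (by linarith)
    have hval := hb _ (single_pos_shift hVs i (by linarith : (0:ℝ) ≤ t))
    rw [dot_pc_single] at hval
    have heq : (0:ℝ) + t * (-(∑ j, l j * Vs j * Y j i)) + t ^ 2 * (-(l i * Y i i))
        = -(t * ∑ j, l j * Vs j * Y j i) - t ^ 2 * (l i * Y i i) := by ring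
    linarith
  -- step B : l is positive
  have hpos : ∀ i, 0 < l i := by
    intro i
    rcases (hnn i).lt_or_eq with h | h
    · exact h
    exfalso
    set α : Finset (Fin n) := Finset.univ.filter (fun j => 0 < l j) with hα
    have hα1 : α.Nonempty := by
      have hex : ∃ j, l j ≠ 0 := by
        by_contra hno
        push_neg at hno
        rw [Finset.sum_congr rfl fun j _ => by rw [hno j, abs_zero]] at hl1
        simp at hl1
      obtain ⟨j, hj⟩ := hex
      exact ⟨j, by simp [hα, (hnn j).lt_of_ne (Ne.symm hj)]⟩
    have hα2 : α ≠ Finset.univ := by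
      intro hcontr
      have : i ∈ α := hcontr ▸ Finset.mem_univ i
      rw [hα, Finset.mem_filter] at this
      rw [← h] at this
      exact lt_irrefl _ this.2
    obtain ⟨a, ha, b, hbc, hYab⟩ := hirr α hα1 hα2
    have hla : 0 < l a := by rw [hα, Finset.mem_filter] at ha; exact ha.2
    have hlb : l b = 0 := by
      have hb' := Finset.mem_compl.mp hbc
      rw [hα, Finset.mem_filter] at hb'
      push_neg at hb'
      exact le_antisymm (hb' (Finset.mem_univ b)) (hnn b)
    have hab : a ≠ b := fun hcontr => by rw [hcontr, hlb] at hla; exact lt_irrefl _ hla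
    have hYab' : Y a b < 0 := (hZ a b hab).lt_of_ne hYab
    have hA : (∑ j, l j * Vs j * Y j b) < 0 := by
      calc (∑ j, l j * Vs j * Y j b) < ∑ _j : Fin n, (0:ℝ) := by
            refine Finset.sum_lt_sum (fun j _ => ?_) ⟨a, Finset.mem_univ a, ?_⟩
            · rcases eq_or_ne j b with rfl | hjb
              · rw [hlb]; simp
              · exact mul_nonpos_of_nonneg_of_nonpos
                  (mul_nonneg (hnn j) (hVs j).le) (hZ j b hjb)
            · exact mul_neg_of_pos_of_neg (mul_pos hla (hVs a)) hYab'
      _ = 0 := Finset.sum_const_zero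
    obtain ⟨t, ht1, hts⟩ := lin_blowup (-(∑ j, l j * Vs j * Y j b)) s (by linarith)
    have hval := hb _ (single_pos_shift hVs b (by linarith : (0:ℝ) ≤ t))
    rw [dot_pc_single, hlb] at hval
    have heq : -(t * ∑ j, l j * Vs j * Y j b) - t ^ 2 * (0 * Y b b)
        = t * (-(∑ j, l j * Vs j * Y j b)) := by ring
    linarith
  refine ⟨hpos, PosDef.of_dotProduct_mulVec_pos ?_ ?_⟩
  · rw [Matrix.IsHermitian, conjTranspose_eq_transpose_of_trivial]
    exact hmat_transpose hY l
  intro v hv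
  have hstar : star v = v := by funext i; simp
  rw [hstar]
  by_contra hle
  push_neg at hle
  have hzh : ∀ i j, i ≠ j → hmat Y l i j ≤ 0 :=
    hmat_offdiag_nonpos hZ (fun i => (hpos i).le)
  -- any nonnegative direction with negative energy gives a contradiction
  have hcase1 : ∀ w : Fin n → ℝ, (∀ i, 0 ≤ w i) → w ⬝ᵥ (hmat Y l *ᵥ w) < 0 → False := by
    intro w hwnn hwq
    obtain ⟨u1, hu1⟩ : ∃ u1 : Fin n → ℝ, u1 = fun _ => (1:ℝ) := ⟨fun _ => 1, rfl⟩
    obtain ⟨t, ht1, hts⟩ := quad_blowup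
      (u1 ⬝ᵥ (Matrix.diagonal l *ᵥ (Y *ᵥ Vs)) - qnorm Y l u1)
      (w ⬝ᵥ (Matrix.diagonal l *ᵥ (Y *ᵥ Vs)) - 2 * (u1 ⬝ᵥ (hmat Y l *ᵥ w)))
      (-(w ⬝ᵥ (hmat Y l *ᵥ w))) s (by linarith)
    have hxpos : ∀ j, 0 < (u1 + t • w) j := by
      intro j
      have := mul_nonneg (by linarith : (0:ℝ) ≤ t) (hwnn j)
      simp only [Pi.add_apply, Pi.smul_apply, smul_eq_mul, hu1]
      linarith
    have hval := hb _ hxpos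
    rw [dot_pc hY, expand_quad hY l (Matrix.diagonal l *ᵥ (Y *ᵥ Vs)) u1 w t] at hval
    linarith
  by_cases hex : ∃ u : Fin n → ℝ, u ⬝ᵥ (hmat Y l *ᵥ u) < 0
  · obtain ⟨u, hu⟩ := hex
    exact hcase1 (fun i => |u i|) (fun i => abs_nonneg _)
      (lt_of_le_of_lt (abs_quad hzh u) hu)
  push_neg at hex
  have hq0 : v ⬝ᵥ (hmat Y l *ᵥ v) = 0 := le_antisymm hle (hex v)
  set w : Fin n → ℝ := fun i => |v i| with hw
  have hwq : w ⬝ᵥ (hmat Y l *ᵥ w) = 0 := le_antisymm (hq0 ▸ abs_quad hzh v) (hex w)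
  have hker : hmat Y l *ᵥ w = 0 := kernel_of_quad_zero (hmat_transpose hY l) hex hwq
  have hwnn : ∀ i, 0 ≤ w i := fun i => abs_nonneg _
  have hwne : w ≠ 0 := fun hcontr => hv (funext fun i => abs_eq_zero.mp (congrFun hcontr i))
  have hwpos : ∀ i, 0 < w i := by
    by_contra hno
    push_neg at hno
    obtain ⟨b0, hb0⟩ := hno
    have hwb0 : w b0 = 0 := le_antisymm hb0 (hwnn b0)
    set α : Finset (Fin n) := Finset.univ.filter (fun j => 0 < w j) with hα
    have hα1 : α.Nonempty := by
      obtain ⟨j, hj⟩ := Function.ne_iff.mp hwne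
      exact ⟨j, by simp [hα, (hwnn j).lt_of_ne (Ne.symm hj)]⟩
    have hα2 : α ≠ Finset.univ := by
      intro hcontr
      have : b0 ∈ α := hcontr ▸ Finset.mem_univ b0
      rw [hα, Finset.mem_filter] at this
      rw [hwb0] at this
      exact lt_irrefl _ this.2
    obtain ⟨a, ha, b, hbc, hYab⟩ := hirr α hα1 hα2
    have hwa : 0 < w a := by rw [hα, Finset.mem_filter] at ha; exact ha.2
    have hwb : w b = 0 := by
      have hb' := Finset.mem_compl.mp hbc
      rw [hα, Finset.mem_filter] at hb'
      push_neg at hb'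
      exact le_antisymm (hb' (Finset.mem_univ b)) (hwnn b)
    have hab : b ≠ a := by
      intro hcontr
      rw [← hcontr, hwb] at hwa
      exact lt_irrefl _ hwa
    have hYba : Y b a < 0 := by
      have h1 : Y b a = Y a b := by
        conv_lhs => rw [← hY]
        rfl
      rw [h1]
      exact (hZ a b (fun h => hab h.symm)).lt_of_ne hYab
    have hhba : hmat Y l b a < 0 := by
      rw [hmat_apply]
      nlinarith [hpos a, hpos b]
    have hzero : (hmat Y l *ᵥ w) b = 0 := by rw [hker]; rfl
    have hsum : (hmat Y l *ᵥ w) b = ∑ j, hmat Y l b j * w j := by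
      simp [mulVec, dotProduct]
    have hlt : (∑ j, hmat Y l b j * w j) < 0 := by
      calc (∑ j, hmat Y l b j * w j) < ∑ _j : Fin n, (0:ℝ) := by
            refine Finset.sum_lt_sum (fun j _ => ?_) ⟨a, Finset.mem_univ a, ?_⟩
            · rcases eq_or_ne b j with rfl | hbj
              · rw [hwb]; simp
              · exact mul_nonpos_of_nonpos_of_nonneg (hzh b j hbj) (hwnn j)
            · exact mul_neg_of_neg_of_pos hhba hwa
      _ = 0 := Finset.sum_const_zero
    rw [hsum] at hzero
    exact absurd hzero (ne_of_lt hlt)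
  have hcpos : 0 < w ⬝ᵥ (Matrix.diagonal l *ᵥ (Y *ᵥ Vs)) := by
    obtain ⟨i0, hi0⟩ := Function.ne_iff.mp hIne
    have hi0' : 0 < (Y *ᵥ Vs) i0 := (hInn i0).lt_of_ne (Ne.symm hi0)
    refine Finset.sum_pos' (fun i _ => ?_) ⟨i0, Finset.mem_univ i0, ?_⟩
    · rw [mulVec_diagonal]
      exact mul_nonneg (hwnn i) (mul_nonneg (hpos i).le (hInn i))
    · rw [mulVec_diagonal]
      exact mul_pos (hwpos i0) (mul_pos (hpos i0) hi0')
  obtain ⟨t, ht1, hts⟩ := lin_blowup _ s hcpos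
  have hval := hb (t • w) (fun j => mul_pos (by linarith : (0:ℝ) < t) (hwpos j))
  rw [dot_pc hY] at hval
  have h1 : (t • w) ⬝ᵥ (Matrix.diagonal l *ᵥ (Y *ᵥ Vs))
      = t * (w ⬝ᵥ (Matrix.diagonal l *ᵥ (Y *ᵥ Vs))) := by
    rw [smul_dotProduct]; rfl
  have h2 : qnorm Y l (t • w) = 0 := by
    rw [qnorm, mulVec_smul, hker]
    simp
  rw [h1, h2] at hval
  linarith

lemma quad_small_norm (hn : 1 ≤ n) {h : Matrix (Fin n) (Fin n) ℝ} (hp : h.PosDef)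
    {δ : ℝ} (hδ : 0 < δ) :
    ∃ m > 0, ∀ u : Fin n → ℝ, u ⬝ᵥ (h *ᵥ u) < m → ‖u‖ < δ := by
  haveI : Nonempty (Fin n) := ⟨⟨0, hn⟩⟩
  have hsne : (Metric.sphere (0 : Fin n → ℝ) δ).Nonempty := by
    refine ⟨fun _ => δ, ?_⟩
    rw [mem_sphere_iff_norm, sub_zero]
    simpa [pi_norm_const] using abs_of_pos hδ
  obtain ⟨z, hzS, hz⟩ := (isCompact_sphere (0 : Fin n → ℝ) δ).exists_isMinOn hsne
    (continuous_quadform h).continuousOn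
  have hzn : ‖z‖ = δ := by rwa [mem_sphere_iff_norm, sub_zero] at hzS
  have hzne : z ≠ 0 := fun hc => by rw [hc, norm_zero] at hzn; linarith
  refine ⟨z ⬝ᵥ (h *ᵥ z), pd_quad_pos hp hzne, fun u hu => ?_⟩
  by_contra hge
  push_neg at hge
  have hune : u ≠ 0 := fun hc => by rw [hc, norm_zero] at hge; linarith
  have hun : 0 < ‖u‖ := lt_of_lt_of_le hδ hge
  set a : ℝ := δ / ‖u‖ with hadef
  have ha0 : 0 < a := div_pos hδ hun
  have ha1 : a ≤ 1 := (div_le_one hun).mpr hge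
  have hmemS : a • u ∈ Metric.sphere (0 : Fin n → ℝ) δ := by
    rw [mem_sphere_iff_norm, sub_zero, norm_smul, Real.norm_eq_abs, abs_of_pos ha0, hadef,
      div_mul_cancel₀ _ hun.ne']
  have hq : (a • u) ⬝ᵥ (h *ᵥ (a • u)) = a * (a * (u ⬝ᵥ (h *ᵥ u))) := by
    rw [mulVec_smul, smul_dotProduct, dotProduct_smul]
    rfl
  have hle2 : z ⬝ᵥ (h *ᵥ z) ≤ a * (a * (u ⬝ᵥ (h *ᵥ u))) := by
    have := hz hmemS
    simpa [hq] using this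
  have hqu : 0 < u ⬝ᵥ (h *ᵥ u) := pd_quad_pos hp hune
  nlinarith [mul_nonneg (mul_nonneg (sub_nonneg.mpr ha1) (by linarith : (0:ℝ) ≤ 1 + a)) hqu.le]

lemma pc_mem_closure_Fset {Y : Matrix (Fin n) (Fin n) ℝ} {Vs φ : Fin n → ℝ}
    (hφ : ∀ i, 0 ≤ φ i) : Pc Y Vs φ ∈ closure (Fset Y Vs) := by
  have htend : Filter.Tendsto (fun k : ℕ => φ + (1 / (k + 1) : ℝ) • (fun _ => (1:ℝ)))
      Filter.atTop (nhds φ) := by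
    have h0 : Filter.Tendsto (fun k : ℕ => (1 / (k + 1) : ℝ)) Filter.atTop (nhds 0) :=
      tendsto_one_div_add_atTop_nhds_zero_nat
    have h1 := h0.smul_const (fun _ => (1:ℝ) : Fin n → ℝ)
    rw [zero_smul] at h1
    simpa using Filter.Tendsto.const_add φ h1
  have htend2 : Filter.Tendsto
      (fun k : ℕ => Pc Y Vs (φ + (1 / (k + 1) : ℝ) • (fun _ => (1:ℝ))))
      Filter.atTop (nhds (Pc Y Vs φ)) :=
    ((continuous_Pc Y Vs).continuousAt.tendsto).comp htend
  refine mem_closure_of_tendsto htend2 (Filter.Eventually.of_forall fun k => ?_)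
  refine ⟨φ + (1 / (k + 1) : ℝ) • (fun _ => (1:ℝ)), fun i => ?_, rfl⟩
  have hk : (0:ℝ) < 1 / (k + 1) := by positivity
  simp only [Pi.add_apply, Pi.smul_apply, smul_eq_mul, mul_one]
  linarith [hφ i]

lemma isClosed_halfspace (l : Fin n → ℝ) (a : ℝ) : IsClosed {y : Fin n → ℝ | l ⬝ᵥ y ≤ a} :=
  isClosed_le (continuous_dotl l) continuous_const

lemma master {Y : Matrix (Fin n) (Fin n) ℝ} {Vs l : Fin n → ℝ} {s : ℝ} (hn : 1 ≤ n)
    (hPD : Y.PosDef) (hZ : IsZmat Y) (hirr : IsIrred Y) (hVs : ∀ i, 0 < Vs i)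
    (hInn : ∀ i, 0 ≤ (Y *ᵥ Vs) i) (hIne : Y *ᵥ Vs ≠ 0) (hl1 : ∑ i, |l i| = 1)
    (S : Set (Fin n → ℝ)) (hFS : Fset Y Vs ⊆ S) (hSr : S ⊆ Set.range (Pc Y Vs)) :
    (Supports l s S ↔ (l ∈ Lam1 Y ∧ s = qnorm Y l (phiv Y Vs l))) ∧
    (Supports l s S → closure S ∩ {y | l ⬝ᵥ y = s} = {Pc Y Vs (phiv Y Vs l)}) := by
  have hY : Yᵀ = Y := by
    have := hPD.1
    rwa [Matrix.IsHermitian, conjTranspose_eq_transpose_of_trivial] at this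
  have hRange : (hmat Y l).PosDef →
      Set.range (Pc Y Vs) ⊆ {y | l ⬝ᵥ y ≤ qnorm Y l (phiv Y Vs l)} := by
    rintro hPDh y ⟨x, rfl⟩
    have h0 := pd_quad_nonneg hPDh (x - phiv Y Vs l)
    have h1 : l ⬝ᵥ Pc Y Vs x = qnorm Y l (phiv Y Vs l)
        - (x - phiv Y Vs l) ⬝ᵥ (hmat Y l *ᵥ (x - phiv Y Vs l)) := by
      rw [dot_pc hY, complete_square hY hPDh]
    show l ⬝ᵥ Pc Y Vs x ≤ _
    rw [h1]; linarith
  have hContact : (hmat Y l).PosDef →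
      l ⬝ᵥ Pc Y Vs (phiv Y Vs l) = qnorm Y l (phiv Y Vs l) := by
    intro hPDh
    rw [dot_pc hY, complete_square hY hPDh, sub_self]
    simp
  have hPhiMem : (hmat Y l).PosDef → (∀ i, 0 < l i) →
      Pc Y Vs (phiv Y Vs l) ∈ closure S := fun hPDh hpos =>
    closure_mono hFS (pc_mem_closure_Fset
      (phiv_nonneg hY hZ hPDh (fun i => (hpos i).le) hInn))
  have hmain : Supports l s S ↔ (l ∈ Lam1 Y ∧ s = qnorm Y l (phiv Y Vs l)) := by
    constructor
    · rintro ⟨hsub, ⟨y, hyc, hyeq⟩⟩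
      have hb : ∀ x : Fin n → ℝ, (∀ i, 0 < x i) → l ⬝ᵥ Pc Y Vs x ≤ s :=
        fun x hx => hsub (hFS ⟨x, hx, rfl⟩)
      obtain ⟨hpos, hPDh⟩ := reverse_core hPD hZ hirr hVs hInn hIne hl1 hb
      have hsum : ∑ i, l i = 1 := by
        rw [← hl1]
        exact Finset.sum_congr rfl fun i _ => (abs_of_pos (hpos i)).symm
      have hle1 : s ≤ qnorm Y l (phiv Y Vs l) := by
        have hclos : closure S ⊆ {y | l ⬝ᵥ y ≤ qnorm Y l (phiv Y Vs l)} :=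
          closure_minimal (hSr.trans (hRange hPDh)) (isClosed_halfspace l _)
        have := hclos hyc
        rw [Set.mem_setOf_eq] at this hyeq
        linarith [this, hyeq.ge]
      have hle2 : qnorm Y l (phiv Y Vs l) ≤ s := by
        have hclos : closure S ⊆ {y | l ⬝ᵥ y ≤ s} :=
          closure_minimal hsub (isClosed_halfspace l s)
        have := hclos (hPhiMem hPDh hpos)
        rw [Set.mem_setOf_eq, hContact hPDh] at this
        exact this
      exact ⟨⟨hPDh, hpos, hsum⟩, le_antisymm hle1 hle2⟩
    · rintro ⟨⟨hPDh, hpos, -⟩, hseq⟩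
      refine ⟨fun y hy => ?_, ⟨Pc Y Vs (phiv Y Vs l), hPhiMem hPDh hpos, ?_⟩⟩
      · have := hRange hPDh (hSr hy)
        rw [Set.mem_setOf_eq] at this ⊢
        rw [hseq]; exact this
      · rw [Set.mem_setOf_eq, hContact hPDh, hseq]
  refine ⟨hmain, fun hsupp => ?_⟩
  obtain ⟨⟨hPDh, hpos, -⟩, hseq⟩ := hmain.mp hsupp
  ext y
  simp only [Set.mem_inter_iff, Set.mem_setOf_eq, Set.mem_singleton_iff]
  constructor
  · rintro ⟨hyc, hyeq⟩
    apply eq_of_forall_dist_le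
    intro ε hε
    obtain ⟨δ', hδ'pos, hδ'⟩ := Metric.continuousAt_iff.mp
      (continuous_Pc Y Vs).continuousAt (ε / 2) (by linarith)
    obtain ⟨m, hm, hmprop⟩ := quad_small_norm hn hPDh hδ'pos
    obtain ⟨p, hpmem, hpd⟩ := Metric.mem_closure_iff.mp ((closure_mono hSr) hyc)
      (min m (ε / 2)) (by positivity)
    obtain ⟨x, rfl⟩ := hpmem
    have hqx : (x - phiv Y Vs l) ⬝ᵥ (hmat Y l *ᵥ (x - phiv Y Vs l))
        = l ⬝ᵥ y - l ⬝ᵥ Pc Y Vs x := by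
      have h1 : l ⬝ᵥ Pc Y Vs x = qnorm Y l (phiv Y Vs l)
          - (x - phiv Y Vs l) ⬝ᵥ (hmat Y l *ᵥ (x - phiv Y Vs l)) := by
        rw [dot_pc hY, complete_square hY hPDh]
      rw [h1, hyeq, hseq]; ring
    have hb2 : l ⬝ᵥ (y - Pc Y Vs x) ≤ ‖y - Pc Y Vs x‖ := dot_le_norm hl1 _
    have hqlt : (x - phiv Y Vs l) ⬝ᵥ (hmat Y l *ᵥ (x - phiv Y Vs l)) < m := by
      have hsubd : l ⬝ᵥ y - l ⬝ᵥ Pc Y Vs x = l ⬝ᵥ (y - Pc Y Vs x) := by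
        rw [dotProduct_sub]
      have hnd : ‖y - Pc Y Vs x‖ = dist y (Pc Y Vs x) := (dist_eq_norm _ _).symm
      have : dist y (Pc Y Vs x) < min m (ε / 2) := hpd
      calc (x - phiv Y Vs l) ⬝ᵥ (hmat Y l *ᵥ (x - phiv Y Vs l))
          = l ⬝ᵥ (y - Pc Y Vs x) := by rw [hqx, hsubd]
        _ ≤ ‖y - Pc Y Vs x‖ := hb2
        _ = dist y (Pc Y Vs x) := hnd
        _ < min m (ε / 2) := hpd
        _ ≤ m := min_le_left _ _
    have hxφ : ‖x - phiv Y Vs l‖ < δ' := hmprop _ hqlt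
    have h2 : dist (Pc Y Vs x) (Pc Y Vs (phiv Y Vs l)) < ε / 2 := by
      apply hδ'
      rw [dist_eq_norm]
      exact hxφ
    have h3 : dist y (Pc Y Vs x) < ε / 2 :=
      lt_of_lt_of_le hpd (min_le_right _ _)
    calc dist y (Pc Y Vs (phiv Y Vs l))
        ≤ dist y (Pc Y Vs x) + dist (Pc Y Vs x) (Pc Y Vs (phiv Y Vs l)) := dist_triangle _ _ _
      _ ≤ ε := by linarith
  · rintro rfl
    exact ⟨hPhiMem hPDh hpos, by rw [hContact hPDh, hseq]⟩

theorem stmt_11 (n : ℕ) (hn : 1 ≤ n)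
    (Y : Matrix (Fin n) (Fin n) ℝ)
    (hPD : Y.PosDef)
    (hZ : IsZmat Y)
    (hirr : IsIrred Y)
    (Vs : Fin n → ℝ) (hVs : ∀ i, 0 < Vs i)
    (hInn : ∀ i, 0 ≤ (Y *ᵥ Vs) i) (hIne : Y *ᵥ Vs ≠ 0)
    (l : Fin n → ℝ) (hl1 : ∑ i, |l i| = 1) (s : ℝ) :
    (Supports l s (Fset Y Vs) ↔ (l ∈ Lam1 Y ∧ s = qnorm Y l (phiv Y Vs l))) ∧
    (Supports l s (Fset Y Vs) →
      closure (Fset Y Vs) ∩ {y | l ⬝ᵥ y = s} = {Pc Y Vs (phiv Y Vs l)}) ∧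
    (Supports l s (Fset Y Vs) ↔ Supports l s (Set.range (Pc Y Vs))) ∧
    (Supports l s (Set.range (Pc Y Vs)) →
      closure (Set.range (Pc Y Vs)) ∩ {y | l ⬝ᵥ y = s} = {Pc Y Vs (phiv Y Vs l)}) := by
  have hFr : Fset Y Vs ⊆ Set.range (Pc Y Vs) := by
    rintro P ⟨x, hx, hPx⟩
    exact ⟨x, hPx⟩
  obtain ⟨m1, u1⟩ := master hn hPD hZ hirr hVs hInn hIne hl1 (Fset Y Vs) subset_rfl hFr
  obtain ⟨m2, u2⟩ := master hn hPD hZ hirr hVs hInn hIne hl1 (Set.range (Pc Y Vs))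
    hFr subset_rfl
  exact ⟨m1, u1, m1.trans m2.symm, u2⟩
end
end
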